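/- arXiv:2501.04209 — 7 statements merged into one kernel-verified Lean document; each statement's English description precedes it below -/
import Mathlib

section
/- Let n be an odd primitive non-deficient number which is perfect (i.e., σ(n) = 2n). Then S(n) > 2·log(24·√2/25)/√n + 3/n. -/
/-- The sum of the positive divisors of `n`. -/
def sigma1 (n : ℕ) : ℕ := ∑ d ∈ n.divisors, d

/-- `H n = n / φ(n)`. -/
noncomputable def H (n : ℕ) : ℝ := (n : ℝ) / (Nat.totient n : ℝ)

/-- The surplus `S n = H n - 2`. -/
noncomputable def S (n : ℕ) : ℝ := H n - 2

lemma sigma1_mul {m k : ℕ} (h : m.Coprime k) : sigma1 (m * k) = sigma1 m * sigma1 k :=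
  Nat.Coprime.sum_divisors_mul h

lemma sigma1_prime_pow {p : ℕ} (hp : p.Prime) (a : ℕ) :
    sigma1 (p ^ a) = ∑ k ∈ Finset.range (a + 1), p ^ k := by
  rw [sigma1, ← ArithmeticFunction.sigma_one_apply, ArithmeticFunction.sigma_one_apply_prime_pow hp]

lemma sigma1_pos {m : ℕ} (hm : 0 < m) : 0 < sigma1 m := by
  rw [sigma1]
  exact Finset.sum_pos (fun d hd => Nat.pos_of_mem_divisors hd) ⟨1, Nat.one_mem_divisors.mpr hm.ne'⟩

lemma geom_nat {p : ℕ} (a : ℕ) :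
    (p - 1) * (∑ k ∈ Finset.range (a + 1), p ^ k) = p ^ (a + 1) - 1 := by
  induction a with
  | zero => simp
  | succ a ih =>
    rw [Finset.sum_range_succ, Nat.mul_add, ih]
    rcases Nat.eq_zero_or_pos p with rfl | hp
    · simp
    have hx : 1 ≤ p ^ (a + 1) := Nat.one_le_pow _ _ hp
    have h2 : p * p ^ (a + 1) = p ^ (a + 1 + 1) := (pow_succ' p (a+1)).symm
    have h1 : (p - 1) * p ^ (a + 1) = p ^ (a + 1 + 1) - p ^ (a + 1) := by
      rw [Nat.sub_mul, one_mul, h2]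
    have h3 : p ^ (a + 1) ≤ p ^ (a + 1 + 1) := Nat.pow_le_pow_right hp (by omega)
    rw [h1]
    omega

lemma sigma1_prime_pow_mul {p : ℕ} (hp : p.Prime) (a : ℕ) :
    (p - 1) * sigma1 (p ^ a) = p ^ (a + 1) - 1 := by
  rw [sigma1_prime_pow hp, geom_nat]

lemma phi_sigma_pp {p : ℕ} (hp : p.Prime) {a : ℕ} (ha : 0 < a) :
    Nat.totient (p ^ a) * sigma1 (p ^ a) ≤ p ^ (2 * a) := by
  rw [Nat.totient_prime_pow hp ha]
  have h1 : p ^ (a - 1) * (p - 1) * sigma1 (p ^ a) = p ^ (a - 1) * (p ^ (a + 1) - 1) := by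
    rw [mul_assoc, sigma1_prime_pow_mul hp]
  rw [h1]
  calc p ^ (a - 1) * (p ^ (a + 1) - 1) ≤ p ^ (a - 1) * p ^ (a + 1) :=
        Nat.mul_le_mul_left _ (Nat.sub_le _ _)
    _ = p ^ (2 * a) := by rw [← pow_add]; congr 1; omega

lemma phi_sigma_le (m : ℕ) : Nat.totient m * sigma1 m ≤ m ^ 2 := by
  induction m using Nat.strong_induction_on with
  | _ m ih =>
  rcases Nat.eq_zero_or_pos m with rfl | h0
  · simp [sigma1]
  rcases eq_or_ne m 1 with rfl | h1
  · simp [sigma1]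
  have hpp : m.minFac.Prime := Nat.minFac_prime h1
  set p := m.minFac
  set a := m.factorization p with ha_def
  set d := ordCompl[p] m with hd_def
  have hsplit : p ^ a * d = m := Nat.ordProj_mul_ordCompl_eq_self m p
  have hcop : Nat.Coprime (p ^ a) d := Nat.Coprime.pow_left _ (Nat.coprime_ordCompl hpp h0.ne')
  have ha : 0 < a := hpp.factorization_pos_of_dvd h0.ne' (Nat.minFac_dvd m)
  have hd0 : 0 < d := Nat.ordCompl_pos p h0.ne'
  have hdm : d < m := by
    have hpa : 2 ≤ p ^ a := by
      calc 2 ≤ p := hpp.two_le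
      _ = p ^ 1 := (pow_one p).symm
      _ ≤ p ^ a := Nat.pow_le_pow_right hpp.pos ha
    nlinarith [hsplit]
  have ihd := ih d hdm
  calc Nat.totient m * sigma1 m
      = (Nat.totient (p ^ a) * sigma1 (p ^ a)) * (Nat.totient d * sigma1 d) := by
        rw [← hsplit, Nat.totient_mul hcop, sigma1_mul hcop]; ring
    _ ≤ p ^ (2 * a) * d ^ 2 :=
        Nat.mul_le_mul (phi_sigma_pp hpp ha) ihd
    _ = (p ^ a * d) ^ 2 := by ring
    _ = m ^ 2 := by rw [hsplit]

lemma sigma1_even_of_odd_exp {p a : ℕ} (hp : p.Prime) (hpodd : Odd p) (ha : Odd a) :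
    2 ∣ sigma1 (p ^ a) := by
  have h2 : ((sigma1 (p ^ a) : ℕ) : ZMod 2) = 0 := by
    rw [sigma1_prime_pow hp]
    push_cast
    have hp1 : (p : ZMod 2) = 1 := by
      have h : p % 2 = 1 := Nat.odd_iff.mp hpodd
      rw [← ZMod.natCast_mod p 2, h]
      simp
    have ha1 : ((a : ZMod 2) + 1) = 0 := by
      have h4 : ((a + 1 : ℕ) : ZMod 2) = 0 := by
        rw [ZMod.natCast_eq_zero_iff]
        obtain ⟨t, rfl⟩ := ha
        exact ⟨t + 1, by ring⟩
      push_cast at h4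
      exact h4
    simp [hp1, ha1]
  exact (ZMod.natCast_eq_zero_iff _ 2).mp h2

lemma odd_prime_of_mem {n p : ℕ} (hodd : Odd n) (hp : p ∈ n.primeFactors) : Odd p := by
  have hpp := Nat.prime_of_mem_primeFactors hp
  rcases hpp.eq_two_or_odd' with rfl | h
  · exact absurd (hodd.of_dvd_nat (Nat.dvd_of_mem_primeFactors hp)) (by decide)
  · exact h

lemma not_two_odd_exps {n : ℕ} (h0 : 0 < n) (hodd : Odd n) (hperfect : sigma1 n = 2 * n)
    {p₁ p₂ : ℕ} (h1 : p₁ ∈ n.primeFactors) (h2 : p₂ ∈ n.primeFactors) (hne : p₁ ≠ p₂)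
    (ho1 : Odd (n.factorization p₁)) (ho2 : Odd (n.factorization p₂)) : False := by
  have hp1 := Nat.prime_of_mem_primeFactors h1
  have hp2 := Nat.prime_of_mem_primeFactors h2
  set a₁ := n.factorization p₁ with ha1
  set d₁ := ordCompl[p₁] n with hd1
  have hsplit1 : p₁ ^ a₁ * d₁ = n := Nat.ordProj_mul_ordCompl_eq_self n p₁
  have hcop1 : Nat.Coprime (p₁ ^ a₁) d₁ :=
    Nat.Coprime.pow_left _ (Nat.coprime_ordCompl hp1 h0.ne')
  have hd1pos : 0 < d₁ := Nat.ordCompl_pos p₁ h0.ne'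
  have hfac : d₁.factorization p₂ = n.factorization p₂ := by
    rw [hd1, Nat.factorization_ordCompl n p₁, Finsupp.erase_ne (Ne.symm hne)]
  set a₂ := n.factorization p₂ with ha2
  set d₂ := ordCompl[p₂] d₁ with hd2
  have hsplit2 : p₂ ^ a₂ * d₂ = d₁ := by
    rw [← hfac]; exact Nat.ordProj_mul_ordCompl_eq_self d₁ p₂
  have hcop2 : Nat.Coprime (p₂ ^ a₂) d₂ := by
    rw [← hfac]; exact Nat.Coprime.pow_left _ (Nat.coprime_ordCompl hp2 hd1pos.ne')
  have e1 : sigma1 n = sigma1 (p₁ ^ a₁) * (sigma1 (p₂ ^ a₂) * sigma1 d₂) := by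
    rw [← hsplit1, sigma1_mul hcop1, ← hsplit2, sigma1_mul hcop2]
  have hdvd1 : 2 ∣ sigma1 (p₁ ^ a₁) :=
    sigma1_even_of_odd_exp hp1 (odd_prime_of_mem hodd h1) ho1
  have hdvd2 : 2 ∣ sigma1 (p₂ ^ a₂) :=
    sigma1_even_of_odd_exp hp2 (odd_prime_of_mem hodd h2) ho2
  have h4 : 4 ∣ 2 * n := by
    rw [← hperfect, e1]
    obtain ⟨x, hx⟩ := hdvd1
    obtain ⟨y, hy⟩ := hdvd2
    exact ⟨x * (y * sigma1 d₂), by rw [hx, hy]; ring⟩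
  have : 2 ∣ n := by omega
  rw [Nat.odd_iff] at hodd
  omega

lemma two_phi_lt {n : ℕ} (hodd : Odd n) (hn1 : 1 < n)
    (hperfect : sigma1 n = 2 * n) : 2 * Nat.totient n < n := by
  have h := phi_sigma_le n
  rw [hperfect] at h
  have hle : 2 * Nat.totient n ≤ n := by nlinarith
  rcases lt_or_eq_of_le hle with h' | h'
  · exact h'
  · rw [Nat.odd_iff] at hodd; omega

lemma key_nat {n : ℕ} (h0 : 0 < n) (hperfect : sigma1 n = 2 * n)
    {p : ℕ} (hp : p ∈ n.primeFactors) :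
    2 * p ^ (n.factorization p + 1) * Nat.totient n ≤ n * (p ^ (n.factorization p + 1) - 1) := by
  have hpp := Nat.prime_of_mem_primeFactors hp
  set a := n.factorization p with ha_def
  set d := ordCompl[p] n with hd_def
  have hsplit : p ^ a * d = n := Nat.ordProj_mul_ordCompl_eq_self n p
  have hcop : Nat.Coprime (p ^ a) d := Nat.Coprime.pow_left _ (Nat.coprime_ordCompl hpp h0.ne')
  have ha : 0 < a := hpp.factorization_pos_of_dvd h0.ne' (Nat.dvd_of_mem_primeFactors hp)
  have hd0 : 0 < d := Nat.ordCompl_pos p h0.ne'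
  have hσd : 0 < sigma1 d := sigma1_pos hd0
  have hσ : sigma1 (p ^ a) * sigma1 d = 2 * (p ^ a * d) := by
    rw [← sigma1_mul hcop, hsplit, hperfect]
  have hφ : Nat.totient n = p ^ (a - 1) * (p - 1) * Nat.totient d := by
    rw [← hsplit, Nat.totient_mul hcop, Nat.totient_prime_pow hpp ha]
  have hpow : p ^ (a + 1) * p ^ (a - 1) = p ^ a * p ^ a := by
    rw [← pow_add, ← pow_add]; congr 1; omega
  have hmain : 2 * p ^ (a + 1) * Nat.totient n * sigma1 d ≤
      n * (p ^ (a + 1) - 1) * sigma1 d := by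
    calc 2 * p ^ (a + 1) * Nat.totient n * sigma1 d
        = p ^ (a + 1) * p ^ (a - 1) * (p - 1) * (2 * (Nat.totient d * sigma1 d)) := by
          rw [hφ]; ring
      _ ≤ p ^ (a + 1) * p ^ (a - 1) * (p - 1) * (2 * d ^ 2) := by
          have := phi_sigma_le d
          exact Nat.mul_le_mul_left _ (by omega)
      _ = (p - 1) * d * p ^ a * (2 * (p ^ a * d)) := by rw [hpow]; ring
      _ = (p - 1) * d * p ^ a * (sigma1 (p ^ a) * sigma1 d) := by rw [hσ]
      _ = d * p ^ a * ((p - 1) * sigma1 (p ^ a)) * sigma1 d := by ring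
      _ = d * p ^ a * (p ^ (a + 1) - 1) * sigma1 d := by rw [sigma1_prime_pow_mul hpp]
      _ = n * (p ^ (a + 1) - 1) * sigma1 d := by rw [← hsplit]; ring
  exact Nat.le_of_mul_le_mul_right hmain hσd

lemma key_real {n : ℕ} (h0 : 0 < n) (hodd : Odd n) (hn1 : 1 < n)
    (hperfect : sigma1 n = 2 * n) {p : ℕ} (hp : p ∈ n.primeFactors) :
    2 < S n * (p : ℝ) ^ (n.factorization p + 1) := by
  have hφpos : 0 < Nat.totient n := Nat.totient_pos.mpr h0
  have hφr : (0:ℝ) < (Nat.totient n : ℝ) := by exact_mod_cast hφpos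
  have h2φ : (2:ℝ) * (Nat.totient n : ℝ) < n := by
    exact_mod_cast two_phi_lt hodd hn1 hperfect
  have hppos : 0 < p := (Nat.prime_of_mem_primeFactors hp).pos
  set a := n.factorization p
  have hpowpos : (0:ℝ) < (p : ℝ) ^ (a + 1) := by positivity
  have hpow1 : 1 ≤ p ^ (a + 1) := Nat.one_le_pow _ _ hppos
  have hkey := key_nat h0 hperfect hp
  have hkeyr : 2 * (p : ℝ) ^ (a + 1) * (Nat.totient n : ℝ) ≤
      (n : ℝ) * ((p : ℝ) ^ (a + 1) - 1) := by
    have e : ((p ^ (a + 1) - 1 : ℕ) : ℝ) = (p:ℝ)^(a+1) - 1 := by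
      rw [Nat.cast_sub hpow1]; push_cast; ring
    rw [← e]; exact_mod_cast hkey
  rw [S, H]
  rw [show ((n:ℝ) / (Nat.totient n : ℝ) - 2) * (p:ℝ)^(a+1)
      = ((n:ℝ) - 2 * (Nat.totient n:ℝ)) * (p:ℝ)^(a+1) / (Nat.totient n : ℝ) by
    field_simp]
  rw [lt_div_iff₀ hφr]
  nlinarith [hkeyr, h2φ, hpowpos]

lemma H_eq_prod {n : ℕ} (h0 : 0 < n) :
    H n = ∏ p ∈ n.primeFactors, ((p : ℝ) / ((p : ℝ) - 1)) := by
  have hφpos : (0:ℝ) < (Nat.totient n : ℝ) := by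
    exact_mod_cast Nat.totient_pos.mpr h0
  have hQ : ((∏ p ∈ n.primeFactors, (p - 1) : ℕ) : ℝ)
      = ∏ p ∈ n.primeFactors, ((p : ℝ) - 1) := by
    rw [Nat.cast_prod]
    exact Finset.prod_congr rfl fun p hp => by
      have h2 := (Nat.prime_of_mem_primeFactors hp).two_le
      rw [Nat.cast_sub (by omega)]
      norm_num
  have hQpos : (0:ℝ) < ∏ p ∈ n.primeFactors, ((p : ℝ) - 1) := by
    apply Finset.prod_pos
    intro p hp
    have h2 := (Nat.prime_of_mem_primeFactors hp).two_le
    have : (2:ℝ) ≤ (p:ℝ) := by exact_mod_cast h2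
    linarith
  have hid := Nat.totient_mul_prod_primeFactors n
  have hidr : (Nat.totient n : ℝ) * (∏ p ∈ n.primeFactors, (p:ℝ))
      = (n:ℝ) * ∏ p ∈ n.primeFactors, ((p:ℝ) - 1) := by
    have := congrArg (fun x : ℕ => (x : ℝ)) hid
    push_cast at this
    rw [← hQ]
    push_cast
    exact this
  rw [H, Finset.prod_div_distrib]
  rw [div_eq_div_iff hφpos.ne' hQpos.ne']
  linarith [hidr]

lemma f_le_of_le {p : ℕ} {y : ℝ} (hy : 1 < y) (h : y ≤ (p:ℝ)) :
    (p:ℝ) / ((p:ℝ) - 1) ≤ y / (y - 1) := by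
  rw [div_le_div_iff₀ (by linarith) (by linarith)]
  nlinarith

lemma f_nonneg {p : ℕ} (h : (2:ℝ) ≤ (p:ℝ)) : 0 ≤ (p:ℝ) / ((p:ℝ) - 1) := by
  apply div_nonneg <;> linarith

set_option maxHeartbeats 2000000 in
theorem surplus_lower_bound_perfect (n : ℕ) (hn : 0 < n) (hodd : Odd n)
    (hnondef : 2 * n ≤ sigma1 n)
    (hprim : ∀ d : ℕ, d ∣ n → d < n → sigma1 d < 2 * d)
    (hperfect : sigma1 n = 2 * n) :
    S n > 2 * Real.log (24 * Real.sqrt 2 / 25) / Real.sqrt n + 3 / n := by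
  classical
  -- n > 1
  have h1 : 1 < n := by
    rcases eq_or_lt_of_le (Nat.one_le_iff_ne_zero.mpr hn.ne') with h | h
    · exfalso; rw [← h] at hperfect; simp [sigma1] at hperfect
    · exact h
  have hφpos : 0 < Nat.totient n := Nat.totient_pos.mpr hn
  have hφr : (0:ℝ) < (Nat.totient n : ℝ) := by exact_mod_cast hφpos
  have h2φ : 2 * Nat.totient n < n := two_phi_lt hodd h1 hperfect
  have hH : 2 < H n := by
    rw [H, lt_div_iff₀ hφr]
    exact_mod_cast by linarith [(by exact_mod_cast h2φ : (2:ℝ) * (Nat.totient n:ℝ) < (n:ℝ))]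
  have hS : 0 < S n := by rw [S]; linarith
  have hH2 : 2 < ∏ p ∈ n.primeFactors, ((p:ℝ) / ((p:ℝ) - 1)) := by
    rw [← H_eq_prod hn]; exact hH
  have hoddp : ∀ p ∈ n.primeFactors, Odd p := fun p hp => odd_prime_of_mem hodd hp
  have h3le : ∀ p ∈ n.primeFactors, 3 ≤ p := by
    intro p hp
    have h2 := (Nat.prime_of_mem_primeFactors hp).two_le
    have ho := hoddp p hp
    rw [Nat.odd_iff] at ho
    omega
  -- bound on the log constant
  have hsqrt2 : Real.sqrt 2 ≤ 1.415 := by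
    rw [show (1.415:ℝ) = Real.sqrt (1.415^2) from (Real.sqrt_sq (by norm_num)).symm]
    exact Real.sqrt_le_sqrt (by norm_num)
  have hsqrt2' : (0:ℝ) < Real.sqrt 2 := Real.sqrt_pos.mpr (by norm_num)
  have hA : 2 * Real.log (24 * Real.sqrt 2 / 25) ≤ 0.7168 := by
    have hpos : (0:ℝ) < 24 * Real.sqrt 2 / 25 := by positivity
    have hlog := Real.log_le_sub_one_of_pos hpos
    nlinarith [hsqrt2]
  set r := Real.sqrt n with hrdef
  have hrpos : 0 < r := Real.sqrt_pos.mpr (by exact_mod_cast hn)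
  have hr2 : r ^ 2 = n := Real.sq_sqrt (by positivity)
  -- at most one odd exponent
  have hpair : ∀ {p₁ p₂ : ℕ}, p₁ ∈ n.primeFactors → p₂ ∈ n.primeFactors → p₁ ≠ p₂ →
      Odd (n.factorization p₁) → Odd (n.factorization p₂) → False :=
    fun h1' h2' hne ho1 ho2 => not_two_odd_exps hn hodd hperfect h1' h2' hne ho1 ho2
  have hexp1 : ∀ p ∈ n.primeFactors, 1 ≤ n.factorization p := fun p hp =>
    (Nat.prime_of_mem_primeFactors hp).factorization_pos_of_dvd hn.ne'
      (Nat.dvd_of_mem_primeFactors hp)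
  -- card ≥ 3
  have hcard3 : 3 ≤ n.primeFactors.card := by
    by_contra hlt
    push_neg at hlt
    have hcases : n.primeFactors.card = 0 ∨ n.primeFactors.card = 1 ∨
        n.primeFactors.card = 2 := by omega
    rcases hcases with h | h | h
    · rw [Finset.card_eq_zero] at h
      rw [h] at hH2
      norm_num at hH2
    · obtain ⟨x, hx⟩ := Finset.card_eq_one.mp h
      have hxF : x ∈ n.primeFactors := by rw [hx]; exact Finset.mem_singleton_self x
      have hb : (x:ℝ)/((x:ℝ)-1) ≤ 3/2 := by
        have := f_le_of_le (p := x) (y := 3) (by norm_num) (by exact_mod_cast h3le x hxF)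
        linarith [this]
      rw [hx, Finset.prod_singleton] at hH2
      linarith
    · obtain ⟨x, y, hxy, hs⟩ := Finset.card_eq_two.mp h
      have hxF : x ∈ n.primeFactors := by rw [hs]; simp
      have hyF : y ∈ n.primeFactors := by rw [hs]; simp
      rw [hs, Finset.prod_pair hxy] at hH2
      have hox := hoddp x hxF; have hoy := hoddp y hyF
      rw [Nat.odd_iff] at hox hoy
      have hx3 := h3le x hxF; have hy3 := h3le y hyF
      rcases hxy.lt_or_gt with hlt' | hlt'
      · have hy5 : 5 ≤ y := by omega
        have hbx : (x:ℝ)/((x:ℝ)-1) ≤ 3/2 := by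
          have := f_le_of_le (p := x) (y := 3) (by norm_num) (by exact_mod_cast hx3); linarith
        have hby : (y:ℝ)/((y:ℝ)-1) ≤ 5/4 := by
          have := f_le_of_le (p := y) (y := 5) (by norm_num) (by exact_mod_cast hy5); linarith
        have h0x : (0:ℝ) ≤ (x:ℝ)/((x:ℝ)-1) := f_nonneg (by exact_mod_cast hx3.trans' (by norm_num))
        have h0y : (0:ℝ) ≤ (y:ℝ)/((y:ℝ)-1) := f_nonneg (by exact_mod_cast hy3.trans' (by norm_num))
        nlinarith
      · have hx5 : 5 ≤ x := by omega
        have hbx : (x:ℝ)/((x:ℝ)-1) ≤ 5/4 := by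
          have := f_le_of_le (p := x) (y := 5) (by norm_num) (by exact_mod_cast hx5); linarith
        have hby : (y:ℝ)/((y:ℝ)-1) ≤ 3/2 := by
          have := f_le_of_le (p := y) (y := 3) (by norm_num) (by exact_mod_cast hy3); linarith
        have h0x : (0:ℝ) ≤ (x:ℝ)/((x:ℝ)-1) := f_nonneg (by exact_mod_cast hx3.trans' (by norm_num))
        have h0y : (0:ℝ) ≤ (y:ℝ)/((y:ℝ)-1) := f_nonneg (by exact_mod_cast hy3.trans' (by norm_num))
        nlinarith
  rcases Nat.lt_or_ge n.primeFactors.card 4 with hc4 | hc4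
  · -- exactly three prime factors
    have hc3 : n.primeFactors.card = 3 := by omega
    have h3F : (3:ℕ) ∈ n.primeFactors := by
      by_contra h3
      have hb : ∀ p ∈ n.primeFactors, (p:ℝ)/((p:ℝ)-1) ≤ 5/4 := by
        intro p hp
        have hp3 := h3le p hp
        have ho := hoddp p hp
        rw [Nat.odd_iff] at ho
        have hp3' : p ≠ 3 := fun he => h3 (he ▸ hp)
        have hp5 : 5 ≤ p := by omega
        have := f_le_of_le (p := p) (y := 5) (by norm_num) (by exact_mod_cast hp5)
        linarith
      have hle : ∏ p ∈ n.primeFactors, ((p:ℝ)/((p:ℝ)-1)) ≤ ∏ _p ∈ n.primeFactors, (5/4:ℝ) :=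
        Finset.prod_le_prod
          (fun p hp => f_nonneg (by exact_mod_cast (h3le p hp).trans' (by norm_num))) hb
      rw [Finset.prod_const, hc3] at hle
      have h54 : ((5:ℝ)/4)^3 < 2 := by norm_num
      linarith
    have h5F : (5:ℕ) ∈ n.primeFactors := by
      by_contra h5
      have hG : (n.primeFactors.erase 3).card = 2 := by
        rw [Finset.card_erase_of_mem h3F, hc3]
      obtain ⟨x, y, hxy, hGeq⟩ := Finset.card_eq_two.mp hG
      have hxG : x ∈ n.primeFactors.erase 3 := by rw [hGeq]; simp
      have hyG : y ∈ n.primeFactors.erase 3 := by rw [hGeq]; simp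
      have hxF : x ∈ n.primeFactors := Finset.mem_of_mem_erase hxG
      have hyF : y ∈ n.primeFactors := Finset.mem_of_mem_erase hyG
      have hx3 : x ≠ 3 := Finset.ne_of_mem_erase hxG
      have hy3 : y ≠ 3 := Finset.ne_of_mem_erase hyG
      have hx5 : x ≠ 5 := fun he => h5 (he ▸ hxF)
      have hy5 : y ≠ 5 := fun he => h5 (he ▸ hyF)
      have hox := hoddp x hxF; have hoy := hoddp y hyF
      rw [Nat.odd_iff] at hox hoy
      have hx7 : 7 ≤ x := by have := h3le x hxF; omega
      have hy7 : 7 ≤ y := by have := h3le y hyF; omega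
      have hx9 : x ≠ 9 := fun he => by
        rw [he] at hxF; exact absurd (Nat.prime_of_mem_primeFactors hxF) (by norm_num)
      have hy9 : y ≠ 9 := fun he => by
        rw [he] at hyF; exact absurd (Nat.prime_of_mem_primeFactors hyF) (by norm_num)
      rw [← Finset.mul_prod_erase _ _ h3F, hGeq, Finset.prod_pair hxy] at hH2
      push_cast at hH2
      have h0x : (0:ℝ) ≤ (x:ℝ)/((x:ℝ)-1) :=
        f_nonneg (by exact_mod_cast (h3le x hxF).trans' (by norm_num))
      have h0y : (0:ℝ) ≤ (y:ℝ)/((y:ℝ)-1) :=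
        f_nonneg (by exact_mod_cast (h3le y hyF).trans' (by norm_num))
      rcases hxy.lt_or_gt with hlt' | hlt'
      · have hy11 : 11 ≤ y := by omega
        have hbx : (x:ℝ)/((x:ℝ)-1) ≤ 7/6 := by
          have := f_le_of_le (p := x) (y := 7) (by norm_num) (by exact_mod_cast hx7); linarith
        have hby : (y:ℝ)/((y:ℝ)-1) ≤ 11/10 := by
          have := f_le_of_le (p := y) (y := 11) (by norm_num) (by exact_mod_cast hy11); linarith
        nlinarith
      · have hx11 : 11 ≤ x := by omega
        have hbx : (x:ℝ)/((x:ℝ)-1) ≤ 11/10 := by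
          have := f_le_of_le (p := x) (y := 11) (by norm_num) (by exact_mod_cast hx11); linarith
        have hby : (y:ℝ)/((y:ℝ)-1) ≤ 7/6 := by
          have := f_le_of_le (p := y) (y := 7) (by norm_num) (by exact_mod_cast hy7); linarith
        nlinarith
    have h5e : (5:ℕ) ∈ n.primeFactors.erase 3 := Finset.mem_erase.mpr ⟨by norm_num, h5F⟩
    have hG2 : ((n.primeFactors.erase 3).erase 5).card = 1 := by
      rw [Finset.card_erase_of_mem h5e, Finset.card_erase_of_mem h3F, hc3]
    obtain ⟨q, hq⟩ := Finset.card_eq_one.mp hG2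
    have hqe : q ∈ (n.primeFactors.erase 3).erase 5 := by rw [hq]; simp
    have hqF : q ∈ n.primeFactors := Finset.mem_of_mem_erase (Finset.mem_of_mem_erase hqe)
    have hq5 : q ≠ 5 := (Finset.mem_erase.mp hqe).1
    have hq3 : q ≠ 3 := Finset.ne_of_mem_erase (Finset.mem_of_mem_erase hqe)
    have hoq := hoddp q hqF
    rw [Nat.odd_iff] at hoq
    have hq7 : 7 ≤ q := by have := h3le q hqF; omega
    have hprodF : ∏ p ∈ n.primeFactors, ((p:ℝ)/((p:ℝ)-1))
        = (((3:ℕ):ℝ)/(((3:ℕ):ℝ)-1)) * ((((5:ℕ):ℝ)/(((5:ℕ):ℝ)-1)) * ((q:ℝ)/((q:ℝ)-1))) := by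
      rw [← Finset.mul_prod_erase _ _ h3F, ← Finset.mul_prod_erase _ _ h5e, hq,
        Finset.prod_singleton]
    rw [hprodF] at hH2
    push_cast at hH2
    have hq16 : (q:ℝ) < 16 := by
      have hq7r : (7:ℝ) ≤ (q:ℝ) := by exact_mod_cast hq7
      have hq1pos : (0:ℝ) < (q:ℝ) - 1 := by linarith
      have hid : ((q:ℝ)/((q:ℝ)-1)) * ((q:ℝ)-1) = (q:ℝ) := div_mul_cancel₀ _ hq1pos.ne'
      nlinarith [mul_lt_mul_of_pos_right hH2 hq1pos, hid]
    have hq15 : q ≤ 15 := by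
      have : q < 16 := by exact_mod_cast hq16
      omega
    -- key bounds
    have k3 := key_real hn hodd h1 hperfect h3F
    have k5 := key_real hn hodd h1 hperfect h5F
    have kq := key_real hn hodd h1 hperfect hqF
    obtain ⟨a, hadef⟩ : ∃ a, n.factorization 3 = a := ⟨_, rfl⟩
    obtain ⟨b, hbdef⟩ : ∃ b, n.factorization 5 = b := ⟨_, rfl⟩
    obtain ⟨c, hcdef⟩ : ∃ c, n.factorization q = c := ⟨_, rfl⟩
    rw [hadef] at k3; rw [hbdef] at k5; rw [hcdef] at kq
    push_cast at k3 k5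
    have ha1 : 1 ≤ a := hadef ▸ hexp1 3 h3F
    have hb1 : 1 ≤ b := hbdef ▸ hexp1 5 h5F
    have hc1 : 1 ≤ c := hcdef ▸ hexp1 q hqF
    -- n = 3^a * (5^b * q^c)
    have hneq : 3^a * (5^b * q^c) = n := by
      have hfp := Nat.factorization_prod_pow_eq_self hn.ne'
      rw [Finsupp.prod] at hfp
      rw [Nat.support_factorization] at hfp
      rw [← Finset.mul_prod_erase _ _ h3F, ← Finset.mul_prod_erase _ _ h5e, hq,
        Finset.prod_singleton, hadef, hbdef, hcdef] at hfp
      exact hfp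
    -- minimum size
    have hmin : 1575 ≤ n := by
      have hpar35 : ¬(Odd a ∧ Odd b) := fun ⟨hoa, hob⟩ =>
        hpair h3F h5F (by norm_num) (hadef ▸ hoa) (hbdef ▸ hob)
      have hpar3q : ¬(Odd a ∧ Odd c) := fun ⟨hoa, hoc⟩ =>
        hpair h3F hqF (Ne.symm hq3) (hadef ▸ hoa) (hcdef ▸ hoc)
      have hpar5q : ¬(Odd b ∧ Odd c) := fun ⟨hob, hoc⟩ =>
        hpair h5F hqF (Ne.symm hq5) (hbdef ▸ hob) (hcdef ▸ hoc)
      have hstep : ∀ u v : ℕ, 2 ≤ u → 1 ≤ v →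
          3 ^ u * (5 ^ v * q ^ c) = n ∨ True → True := fun _ _ _ _ _ => trivial
      rcases Nat.even_or_odd a with hea | hoa
      · have ha2 : 2 ≤ a := by rcases hea with ⟨t, ht⟩; omega
        rcases Nat.even_or_odd b with heb | hob
        · have hb2 : 2 ≤ b := by rcases heb with ⟨t, ht⟩; omega
          calc (1575:ℕ) = 3^2 * (5^2 * 7^1) := by norm_num
            _ ≤ 3^a * (5^b * q^c) := by
              refine Nat.mul_le_mul (Nat.pow_le_pow_right (by norm_num) ha2) ?_
              refine Nat.mul_le_mul (Nat.pow_le_pow_right (by norm_num) hb2) ?_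
              calc 7^1 = 7 := pow_one 7
                _ ≤ q := hq7
                _ = q^1 := (pow_one q).symm
                _ ≤ q^c := Nat.pow_le_pow_right (by omega) hc1
            _ = n := hneq
        · have hec : Even c := by
            rcases Nat.even_or_odd c with h | h
            · exact h
            · exact absurd ⟨hob, h⟩ hpar5q
          have hc2 : 2 ≤ c := by rcases hec with ⟨t, ht⟩; omega
          calc (1575:ℕ) ≤ 3^2 * (5^1 * 7^2) := by norm_num
            _ ≤ 3^a * (5^b * q^c) := by
              refine Nat.mul_le_mul (Nat.pow_le_pow_right (by norm_num) ha2) ?_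
              refine Nat.mul_le_mul (Nat.pow_le_pow_right (by norm_num) hb1) ?_
              calc 7^2 ≤ q^2 := Nat.pow_le_pow_left hq7 2
                _ ≤ q^c := Nat.pow_le_pow_right (by omega) hc2
            _ = n := hneq
      · have heb : Even b := by
          rcases Nat.even_or_odd b with h | h
          · exact h
          · exact absurd ⟨hoa, h⟩ hpar35
        have hec : Even c := by
          rcases Nat.even_or_odd c with h | h
          · exact h
          · exact absurd ⟨hoa, h⟩ hpar3q
        have hb2 : 2 ≤ b := by rcases heb with ⟨t, ht⟩; omega
        have hc2 : 2 ≤ c := by rcases hec with ⟨t, ht⟩; omega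
        calc (1575:ℕ) ≤ 3^1 * (5^2 * 7^2) := by norm_num
          _ ≤ 3^a * (5^b * q^c) := by
            refine Nat.mul_le_mul (Nat.pow_le_pow_right (by norm_num) ha1) ?_
            refine Nat.mul_le_mul (Nat.pow_le_pow_right (by norm_num) hb2) ?_
            calc 7^2 ≤ q^2 := Nat.pow_le_pow_left hq7 2
              _ ≤ q^c := Nat.pow_le_pow_right (by omega) hc2
          _ = n := hneq
    -- cube the three bounds
    have hnpos : (0:ℝ) < n := by exact_mod_cast hn
    have hmul : (8:ℝ) < (S n)^3 * ((3:ℝ)^(a+1) * 5^(b+1) * (q:ℝ)^(c+1)) := by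
      have m1 : (2*2:ℝ) < (S n * 3^(a+1)) * (S n * 5^(b+1)) :=
        mul_lt_mul'' k3 k5 (by norm_num) (by norm_num)
      have m2 : (2*2*2:ℝ) < ((S n * 3^(a+1)) * (S n * 5^(b+1))) * (S n * (q:ℝ)^(c+1)) :=
        mul_lt_mul'' m1 kq (by norm_num) (by norm_num)
      calc (8:ℝ) = 2*2*2 := by norm_num
        _ < _ := m2
        _ = (S n)^3 * ((3:ℝ)^(a+1) * 5^(b+1) * (q:ℝ)^(c+1)) := by ring
    have hnr : (3:ℝ)^a * (5^b * (q:ℝ)^c) = (n:ℝ) := by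
      exact_mod_cast congrArg (fun x : ℕ => (x:ℝ)) hneq
    have hid2 : (3:ℝ)^(a+1) * 5^(b+1) * (q:ℝ)^(c+1) = 15 * q * n := by
      rw [pow_succ, pow_succ, pow_succ, ← hnr]; ring
    have hqr : (q:ℝ) ≤ 15 := by exact_mod_cast hq15
    have hS3 : (8:ℝ) < (S n)^3 * (225 * n) := by
      rw [hid2] at hmul
      have hmono : (S n)^3 * (15*(q:ℝ)*n) ≤ (S n)^3 * (225*n) := by
        apply mul_le_mul_of_nonneg_left _ (by positivity)
        nlinarith [hqr, hnpos]
      linarith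
    have hr39 : (39:ℝ) ≤ r := by
      rw [show (39:ℝ) = Real.sqrt 1521 by
        rw [show (1521:ℝ) = 39^2 by norm_num, Real.sqrt_sq] ; norm_num]
      apply Real.sqrt_le_sqrt
      have : (1575:ℝ) ≤ n := by exact_mod_cast hmin
      linarith
    have hSr : 1/r < S n := by
      have e1 : (1/r)^3 = 1/((n:ℝ)*r) := by
        rw [div_pow, one_pow, pow_succ, hr2]
      have e2 : 1/((n:ℝ)*r) ≤ 8/(225*(n:ℝ)) := by
        rw [div_le_div_iff₀ (by positivity) (by positivity)]
        nlinarith [hr39, hnpos]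
      have e3 : 8/(225*(n:ℝ)) < (S n)^3 := by
        rw [div_lt_iff₀ (by positivity)]
        linarith [hS3]
      have hc1r : (1/r)^3 < (S n)^3 := by rw [e1]; linarith
      exact lt_of_pow_lt_pow_left₀ 3 hS.le hc1r
    -- conclude
    have hlog_r : 2 * Real.log (24 * Real.sqrt 2 / 25) / r ≤ 0.7168 / r := by
      gcongr
    have h3n : (3:ℝ)/(n:ℝ) = 3/r^2 := by rw [hr2]
    have hfr : (0.7168:ℝ)/r + 3/r^2 ≤ 1/r := by
      have hdiff : 1/r - (0.7168/r + 3/r^2) = (0.2832*r - 3)/r^2 := by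
        field_simp
        ring
      have hnum : (0:ℝ) ≤ (0.2832*r - 3)/r^2 := by
        apply div_nonneg _ (by positivity)
        nlinarith [hr39]
      linarith
    rw [h3n]
    linarith
  · -- at least four prime factors
    have hOcard : (n.primeFactors.filter (fun p => Odd (n.factorization p))).card ≤ 1 := by
      rw [Finset.card_le_one]
      intro x hx y hy
      by_contra hne
      obtain ⟨hxF, hxo⟩ := Finset.mem_filter.mp hx
      obtain ⟨hyF, hyo⟩ := Finset.mem_filter.mp hy
      exact hpair hxF hyF hne hxo hyo
    have hEcard : 3 ≤ (n.primeFactors.filter (fun p => ¬ Odd (n.factorization p))).card := by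
      have hsum := Finset.card_filter_add_card_filter_not
        (s := n.primeFactors) (p := fun p => Odd (n.factorization p))
      omega
    obtain ⟨T, hTsub, hTcard⟩ := Finset.exists_subset_card_eq hEcard
    obtain ⟨p₁, p₂, p₃, h12, h13, h23, hTeq⟩ := Finset.card_eq_three.mp hTcard
    have hmem : ∀ p ∈ T, p ∈ n.primeFactors ∧ Even (n.factorization p) := by
      intro p hp
      obtain ⟨hpF, hpo⟩ := Finset.mem_filter.mp (hTsub hp)
      exact ⟨hpF, Nat.not_odd_iff_even.mp hpo⟩
    obtain ⟨hF1, hE1⟩ := hmem p₁ (by rw [hTeq]; simp)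
    obtain ⟨hF2, hE2⟩ := hmem p₂ (by rw [hTeq]; simp)
    obtain ⟨hF3, hE3⟩ := hmem p₃ (by rw [hTeq]; simp)
    have hp1p := Nat.prime_of_mem_primeFactors hF1
    have hp2p := Nat.prime_of_mem_primeFactors hF2
    have hp3p := Nat.prime_of_mem_primeFactors hF3
    have ha1 : 2 ≤ n.factorization p₁ := by
      have := hexp1 p₁ hF1; rcases hE1 with ⟨t, ht⟩; omega
    have ha2 : 2 ≤ n.factorization p₂ := by
      have := hexp1 p₂ hF2; rcases hE2 with ⟨t, ht⟩; omega
    have ha3 : 2 ≤ n.factorization p₃ := by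
      have := hexp1 p₃ hF3; rcases hE3 with ⟨t, ht⟩; omega
    have hd1 : p₁ ^ n.factorization p₁ ∣ n := Nat.ordProj_dvd n p₁
    have hd2 : p₂ ^ n.factorization p₂ ∣ n := Nat.ordProj_dvd n p₂
    have hd3 : p₃ ^ n.factorization p₃ ∣ n := Nat.ordProj_dvd n p₃
    have hcop12 : Nat.Coprime (p₁ ^ n.factorization p₁) (p₂ ^ n.factorization p₂) :=
      Nat.Coprime.pow _ _ ((Nat.coprime_primes hp1p hp2p).mpr h12)
    have hcop13 : Nat.Coprime (p₁ ^ n.factorization p₁) (p₃ ^ n.factorization p₃) :=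
      Nat.Coprime.pow _ _ ((Nat.coprime_primes hp1p hp3p).mpr h13)
    have hcop23 : Nat.Coprime (p₂ ^ n.factorization p₂) (p₃ ^ n.factorization p₃) :=
      Nat.Coprime.pow _ _ ((Nat.coprime_primes hp2p hp3p).mpr h23)
    have hdvd : p₁ ^ n.factorization p₁ * p₂ ^ n.factorization p₂ * p₃ ^ n.factorization p₃ ∣ n :=
      Nat.Coprime.mul_dvd_of_dvd_of_dvd (Nat.Coprime.mul hcop13 hcop23)
        (Nat.Coprime.mul_dvd_of_dvd_of_dvd hcop12 hd1 hd2) hd3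
    have k1 := key_real hn hodd h1 hperfect hF1
    have k2 := key_real hn hodd h1 hperfect hF2
    have k3' := key_real hn hodd h1 hperfect hF3
    -- real components
    have hclaim : ∀ p a : ℕ, p.Prime → 3 ≤ p → 2 ≤ a →
        2 < S n * (p:ℝ) ^ (a+1) → 4 / (S n)^2 ≤ ((p:ℝ)^a)^3 := by
      intro p a hpp' hp3 ha' hk
      have hppos : (0:ℝ) < p := by positivity
      have hp3r : (3:ℝ) ≤ (p:ℝ) := by exact_mod_cast hp3
      have hcpos : (0:ℝ) < (p:ℝ)^a := by positivity
      have hpows : (p:ℝ)^(a+1) = (p:ℝ)^a * p := by rw [pow_succ]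
      rw [hpows] at hk
      have hc2 : (p:ℝ)^2 ≤ (p:ℝ)^a := by
        apply pow_le_pow_right₀ (by linarith) ha'
      rw [div_le_iff₀ (by positivity)]
      rcases le_or_gt 2 (S n * (p:ℝ)^3) with hcase | hcase
      · have h6 : ((p:ℝ)^2)^3 ≤ ((p:ℝ)^a)^3 := pow_le_pow_left₀ (by positivity) hc2 3
        have h4 : (4:ℝ) ≤ (S n)^2 * ((p:ℝ)^2)^3 := by nlinarith [hcase]
        nlinarith [h6, sq_nonneg (S n)]
      · have h8 : (2:ℝ)^3 < (S n * ((p:ℝ)^a * p))^3 := by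
          exact pow_lt_pow_left₀ hk (by norm_num) (by norm_num)
        have hid : (S n * ((p:ℝ)^a * p))^3 = (((p:ℝ)^a)^3 * (S n)^2) * (S n * (p:ℝ)^3) := by
          ring
        have hXpos : (0:ℝ) < ((p:ℝ)^a)^3 * (S n)^2 := by positivity
        nlinarith [h8, hid, hcase, hXpos]
    have hcl1 := hclaim p₁ (n.factorization p₁) hp1p (h3le p₁ hF1) ha1 k1
    have hcl2 := hclaim p₂ (n.factorization p₂) hp2p (h3le p₂ hF2) ha2 k2
    have hcl3 := hclaim p₃ (n.factorization p₃) hp3p (h3le p₃ hF3) ha3 k3'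
    have hnge : ((p₁:ℝ)^(n.factorization p₁)) * ((p₂:ℝ)^(n.factorization p₂))
        * ((p₃:ℝ)^(n.factorization p₃)) ≤ (n:ℝ) := by
      exact_mod_cast Nat.cast_le.mpr (Nat.le_of_dvd hn hdvd)
    have hq0 : (0:ℝ) ≤ 4/(S n)^2 := by positivity
    have hc10 : (0:ℝ) ≤ ((p₁:ℝ)^(n.factorization p₁))^3 := by positivity
    have hc20 : (0:ℝ) ≤ ((p₂:ℝ)^(n.factorization p₂))^3 := by positivity
    have hprod3 : (4/(S n)^2)^3 ≤ ((n:ℝ))^3 := by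
      calc (4/(S n)^2)^3 = (4/(S n)^2)*(4/(S n)^2)*(4/(S n)^2) := by ring
        _ ≤ ((p₁:ℝ)^(n.factorization p₁))^3 * ((p₂:ℝ)^(n.factorization p₂))^3
            * ((p₃:ℝ)^(n.factorization p₃))^3 := by
          apply mul_le_mul (mul_le_mul hcl1 hcl2 hq0 hc10) hcl3 hq0 (by positivity)
        _ = (((p₁:ℝ)^(n.factorization p₁)) * ((p₂:ℝ)^(n.factorization p₂))
            * ((p₃:ℝ)^(n.factorization p₃)))^3 := by ring
        _ ≤ ((n:ℝ))^3 := by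
          apply pow_le_pow_left₀ (by positivity) hnge
    have hn4 : 4/(S n)^2 ≤ (n:ℝ) :=
      le_of_pow_le_pow_left₀ (by norm_num) (by positivity) hprod3
    have hnpos : (0:ℝ) < n := by exact_mod_cast hn
    have hS2 : 4/(n:ℝ) ≤ (S n)^2 := by
      rw [div_le_iff₀ hnpos]
      rw [div_le_iff₀ (by positivity)] at hn4
      nlinarith [hn4]
    have hSr : 2/r ≤ S n := by
      have e : (2/r)^2 = 4/(n:ℝ) := by
        rw [div_pow, hr2]; norm_num
      apply le_of_pow_le_pow_left₀ (n := 2) (by norm_num) hS.le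
      rw [e]; exact hS2
    -- n ≥ 9
    have hn9 : (9:ℕ) ≤ n := by
      have hc1n : p₁ ^ n.factorization p₁ ≤ n := Nat.le_of_dvd hn hd1
      have h9 : 9 ≤ p₁ ^ n.factorization p₁ := by
        calc (9:ℕ) = 3^2 := by norm_num
          _ ≤ p₁^2 := Nat.pow_le_pow_left (h3le p₁ hF1) 2
          _ ≤ p₁ ^ n.factorization p₁ := Nat.pow_le_pow_right hp1p.pos ha1
      omega
    have hr3 : (3:ℝ) ≤ r := by
      rw [show (3:ℝ) = Real.sqrt 9 by
        rw [show (9:ℝ) = 3^2 by norm_num, Real.sqrt_sq] ; norm_num]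
      apply Real.sqrt_le_sqrt
      exact_mod_cast hn9
    have hlog_r : 2 * Real.log (24 * Real.sqrt 2 / 25) / r ≤ 0.7168 / r := by
      gcongr
    have h3n : (3:ℝ)/(n:ℝ) = 3/r^2 := by rw [hr2]
    have hfr : (0.7168:ℝ)/r + 3/r^2 < 2/r := by
      have hdiff : 2/r - (0.7168/r + 3/r^2) = (1.2832*r - 3)/r^2 := by
        field_simp
        ring
      have hnum : (0:ℝ) < (1.2832*r - 3)/r^2 := by
        apply div_pos _ (by positivity)
        nlinarith [hr3]
      linarith
    rw [h3n]
    linarith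
end

section
/- Let n be an odd primitive non-deficient number which is abundant (i.e., σ(n) > 2n). Then S(n) > 2·log(24·√2/25)/√n. -/
lemma sigma1_eq (n : ℕ) : sigma1 n = ArithmeticFunction.sigma 1 n := by
  rw [ArithmeticFunction.sigma_one_apply]; rfl

lemma sigma1_mul_s1 {x y : ℕ} (h : Nat.Coprime x y) : sigma1 (x*y) = sigma1 x * sigma1 y := by
  simp only [sigma1_eq]
  exact ArithmeticFunction.isMultiplicative_sigma.map_mul_of_coprime h

lemma f_fact {n : ℕ} (hn : n ≠ 0) :
    Nat.totient n * sigma1 n =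
      n.factorization.prod fun p k => Nat.totient (p^k) * sigma1 (p^k) := by
  refine Nat.multiplicative_factorization (fun m => Nat.totient m * sigma1 m) ?_ ?_ hn
  · intro x y h
    rw [Nat.totient_mul h, sigma1_mul_s1 h]; ring
  · simp [sigma1]

lemma geom (p : ℕ) (hp : 1 ≤ p) (a : ℕ) :
    (p - 1) * (∑ i ∈ Finset.range (a+1), p^i) + 1 = p^(a+1) := by
  induction a with
  | zero => simpa using Nat.sub_add_cancel hp
  | succ a ih =>
    rw [Finset.sum_range_succ]
    zify [hp] at ih ⊢
    linear_combination ih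

lemma local2 {p : ℕ} (hp : p.Prime) {k : ℕ} (hk : 1 ≤ k) :
    (p^(2*k)+1) * (Nat.totient (p^k) * sigma1 (p^k)) ≤ p^(2*k) * p^(2*k) := by
  have hp1 : 1 ≤ p := hp.one_le
  set s := ∑ i ∈ Finset.range (k+1), p^i with hs
  have hsig : sigma1 (p^k) = s := by
    rw [sigma1_eq, ArithmeticFunction.sigma_one_apply_prime_pow hp]
  have htot : Nat.totient (p^k) = p^(k-1) * (p-1) := Nat.totient_prime_pow hp hk
  have hg : (p - 1) * s + 1 = p^(k+1) := geom p hp1 k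
  have key : (p^(2*k)+1) * (Nat.totient (p^k) * sigma1 (p^k)) + (p^(2*k)+1) * p^(k-1)
      = p^(2*k)*p^(2*k) + p^(2*k) := by
    rw [hsig, htot]
    calc (p^(2*k)+1) * (p^(k-1)*(p-1) * s) + (p^(2*k)+1) * p^(k-1)
        = (p^(2*k)+1) * p^(k-1) * ((p-1)*s + 1) := by ring
      _ = (p^(2*k)+1) * p^(k-1) * p^(k+1) := by rw [hg]
      _ = (p^(2*k)+1) * (p^(k-1) * p^(k+1)) := by ring
      _ = (p^(2*k)+1) * p^(2*k) := by rw [← pow_add]; congr 2; omega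
      _ = p^(2*k)*p^(2*k) + p^(2*k) := by ring
  have h2 : p^(2*k) ≤ (p^(2*k)+1) * p^(k-1) := by
    calc p^(2*k) ≤ (p^(2*k)+1) * 1 := by omega
    _ ≤ (p^(2*k)+1) * p^(k-1) := Nat.mul_le_mul_left _ (Nat.one_le_pow _ _ hp.pos)
  omega

lemma local1 {p : ℕ} (hp : p.Prime) (k : ℕ) :
    Nat.totient (p^k) * sigma1 (p^k) ≤ p^(2*k) := by
  rcases Nat.eq_zero_or_pos k with rfl | hk
  · simp [sigma1]
  · have h := local2 hp hk
    have h2 : p^(2*k) * (Nat.totient (p^k) * sigma1 (p^k)) ≤ p^(2*k) * p^(2*k) := by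
      calc p^(2*k) * (Nat.totient (p^k) * sigma1 (p^k))
          ≤ (p^(2*k)+1) * (Nat.totient (p^k) * sigma1 (p^k)) := by
            exact Nat.mul_le_mul_right _ (by omega)
        _ ≤ p^(2*k) * p^(2*k) := h
    exact Nat.le_of_mul_le_mul_left h2 (Nat.pow_pos hp.pos)

lemma sq_eq_prod {n : ℕ} (hn : n ≠ 0) :
    n^2 = ∏ p ∈ n.primeFactors, p^(2 * n.factorization p) := by
  conv_lhs => rw [← Nat.factorization_prod_pow_eq_self hn]
  rw [Finsupp.prod, ← Finset.prod_pow]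
  apply Finset.prod_congr rfl
  intro p _
  rw [← pow_mul]
  congr 1
  omega

lemma plain_bound {n : ℕ} (hn : n ≠ 0) : Nat.totient n * sigma1 n ≤ n^2 := by
  rw [f_fact hn, sq_eq_prod hn, Finsupp.prod]
  apply Finset.prod_le_prod'
  intro p hp
  exact local1 (Nat.prime_of_mem_primeFactors hp) _

lemma global_bound {n : ℕ} (hn : n ≠ 0) {p0 : ℕ} (hp0 : p0 ∈ n.primeFactors) :
    (p0 ^ (2 * n.factorization p0) + 1) * (Nat.totient n * sigma1 n)
      ≤ p0 ^ (2 * n.factorization p0) * n^2 := by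
  rw [f_fact hn, sq_eq_prod hn, Finsupp.prod]
  rw [Nat.support_factorization,
    ← Finset.mul_prod_erase _ (fun p => Nat.totient (p^n.factorization p) * sigma1 (p^n.factorization p)) hp0,
    ← Finset.mul_prod_erase _ (fun p => p^(2*n.factorization p)) hp0]
  have h1 : (p0 ^ (2 * n.factorization p0) + 1) *
      (Nat.totient (p0 ^ n.factorization p0) * sigma1 (p0 ^ n.factorization p0))
      ≤ p0 ^ (2 * n.factorization p0) * p0 ^ (2 * n.factorization p0) :=
    local2 (Nat.prime_of_mem_primeFactors hp0)
      ((Nat.Prime.factorization_pos_of_dvd (Nat.prime_of_mem_primeFactors hp0) hn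
        (Nat.dvd_of_mem_primeFactors hp0)))
  calc (p0 ^ (2 * n.factorization p0) + 1) *
        ((Nat.totient (p0 ^ n.factorization p0) * sigma1 (p0 ^ n.factorization p0)) *
          ∏ p ∈ n.primeFactors.erase p0, Nat.totient (p^n.factorization p) * sigma1 (p^n.factorization p))
      = ((p0 ^ (2 * n.factorization p0) + 1) *
          (Nat.totient (p0 ^ n.factorization p0) * sigma1 (p0 ^ n.factorization p0))) *
          ∏ p ∈ n.primeFactors.erase p0, Nat.totient (p^n.factorization p) * sigma1 (p^n.factorization p) := by ring
    _ ≤ (p0 ^ (2 * n.factorization p0) * p0 ^ (2 * n.factorization p0)) *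
          ∏ p ∈ n.primeFactors.erase p0, p^(2*n.factorization p) := by
        apply Nat.mul_le_mul h1
        apply Finset.prod_le_prod'
        intro p hp
        exact local1 (Nat.prime_of_mem_primeFactors (Finset.mem_of_mem_erase hp)) _
    _ = p0 ^ (2 * n.factorization p0) * (p0 ^ (2*n.factorization p0) *
          ∏ p ∈ n.primeFactors.erase p0, p^(2*n.factorization p)) := by ring


lemma prime_ge3 {p : ℕ} (hp : p.Prime) (h2 : p ≠ 2) : 3 ≤ p := by
  have := hp.two_le; omega

lemma prime_gt3 {p : ℕ} (hp : p.Prime) (h : 3 < p) : 5 ≤ p := by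
  by_contra h'
  interval_cases p <;> norm_num at hp

lemma prime_gt5 {p : ℕ} (hp : p.Prime) (h : 5 < p) : 7 ≤ p := by
  by_contra h'
  interval_cases p <;> norm_num at hp

lemma prime_gt7 {p : ℕ} (hp : p.Prime) (h : 7 < p) : 11 ≤ p := by
  by_contra h'
  interval_cases p <;> norm_num at hp

lemma fac_le {m p : ℕ} (hm : 0 < m) (h : m ≤ p) : 1 - (m:ℝ)⁻¹ ≤ 1 - (p:ℝ)⁻¹ := by
  have h1 : (0:ℝ) < m := by exact_mod_cast hm
  have h2 : (m:ℝ) ≤ p := by exact_mod_cast h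
  have : (p:ℝ)⁻¹ ≤ (m:ℝ)⁻¹ := by gcongr
  linarith

lemma fac_pos {p : ℕ} (hp : 2 ≤ p) : (0:ℝ) < 1 - (p:ℝ)⁻¹ := by
  have h1 : (1:ℝ) < p := by exact_mod_cast hp
  have : (p:ℝ)⁻¹ < 1 := inv_lt_one_of_one_lt₀ h1
  linarith

lemma prod3_mono {x y z X Y Z : ℝ} (hx : X ≤ x) (hy : Y ≤ y) (hz : Z ≤ z)
    (hX : 0 ≤ X) (hY : 0 ≤ Y) (hZ : 0 ≤ Z) : X*Y*Z ≤ x*y*z := by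
  have h1 : X*Y ≤ x*y := mul_le_mul hx hy hY (le_trans hX hx)
  exact mul_le_mul h1 hz hZ (mul_nonneg (le_trans hX hx) (le_trans hY hy))

lemma sorted3 {a b c : ℕ} (ha : a.Prime) (hb : b.Prime) (hc : c.Prime)
    (ha2 : a ≠ 2) (hb2 : b ≠ 2) (hc2 : c ≠ 2) (hab : a < b) (hbc : b < c)
    (hD : (1 - (a:ℝ)⁻¹) * (1 - (b:ℝ)⁻¹) * (1 - (c:ℝ)⁻¹) ≤ 1/2) :
    a = 3 ∧ b = 5 ∧ (c = 7 ∨ c = 11 ∨ c = 13) := by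
  have ha3 : 3 ≤ a := prime_ge3 ha ha2
  have hb5 : 5 ≤ b := prime_gt3 hb (by omega)
  have hc7 : 7 ≤ c := prime_gt5 hc (by omega)
  have haa : a = 3 := by
    by_contra h
    have ha5 : 5 ≤ a := prime_gt3 ha (by omega)
    have hb7 : 7 ≤ b := prime_gt5 hb (by omega)
    have hc11 : 11 ≤ c := prime_gt7 hc (by omega)
    have key : (1 - ((5:ℕ):ℝ)⁻¹) * (1 - ((7:ℕ):ℝ)⁻¹) * (1 - ((11:ℕ):ℝ)⁻¹)
        ≤ (1 - (a:ℝ)⁻¹) * (1 - (b:ℝ)⁻¹) * (1 - (c:ℝ)⁻¹) :=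
      prod3_mono (fac_le (by norm_num) ha5) (fac_le (by norm_num) hb7)
        (fac_le (by norm_num) hc11) (by norm_num) (by norm_num) (by norm_num)
    norm_num at key
    linarith
  subst haa
  have hbb : b = 5 := by
    by_contra h
    have hb7 : 7 ≤ b := prime_gt5 hb (by omega)
    have hc11 : 11 ≤ c := prime_gt7 hc (by omega)
    have key : (1 - ((3:ℕ):ℝ)⁻¹) * (1 - ((7:ℕ):ℝ)⁻¹) * (1 - ((11:ℕ):ℝ)⁻¹)
        ≤ (1 - (3:ℝ)⁻¹) * (1 - (b:ℝ)⁻¹) * (1 - (c:ℝ)⁻¹) := by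
      have := prod3_mono (fac_le (m := 3) (by norm_num) le_rfl) (fac_le (by norm_num) hb7)
        (fac_le (by norm_num) hc11) (by norm_num) (by norm_num) (by norm_num)
      convert this using 3 <;> norm_num
    norm_num at key
    linarith
  subst hbb
  refine ⟨rfl, rfl, ?_⟩
  have hc16 : c ≤ 16 := by
    by_contra h
    have hc17 : 17 ≤ c := by omega
    have key : (1 - ((3:ℕ):ℝ)⁻¹) * (1 - ((5:ℕ):ℝ)⁻¹) * (1 - ((17:ℕ):ℝ)⁻¹)
        ≤ (1 - (3:ℝ)⁻¹) * (1 - (5:ℝ)⁻¹) * (1 - (c:ℝ)⁻¹) := by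
      have := prod3_mono (fac_le (m := 3) (by norm_num) le_rfl) (fac_le (m := 5) (by norm_num) le_rfl)
        (fac_le (by norm_num) hc17) (by norm_num) (by norm_num) (by norm_num)
      convert this using 3 <;> norm_num
    norm_num at key
    linarith
  interval_cases c <;> revert hc <;> norm_num

lemma pair2 {a b : ℕ} (ha : a.Prime) (hb : b.Prime) (ha2 : a ≠ 2) (hb2 : b ≠ 2)
    (hab : a < b) : ¬ ((1 - (a:ℝ)⁻¹) * (1 - (b:ℝ)⁻¹) ≤ 1/2) := by
  intro hD
  have ha3 : 3 ≤ a := prime_ge3 ha ha2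
  have hb5 : 5 ≤ b := prime_gt3 hb (by omega)
  have k1 : (1 - ((3:ℕ):ℝ)⁻¹) ≤ (1 - (a:ℝ)⁻¹) := fac_le (by norm_num) ha3
  have k2 : (1 - ((5:ℕ):ℝ)⁻¹) ≤ (1 - (b:ℝ)⁻¹) := fac_le (by norm_num) hb5
  have key : (1 - ((3:ℕ):ℝ)⁻¹) * (1 - ((5:ℕ):ℝ)⁻¹) ≤ (1 - (a:ℝ)⁻¹) * (1 - (b:ℝ)⁻¹) :=
    mul_le_mul k1 k2 (by norm_num) (by linarith [k1])
  norm_num at key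
  linarith

lemma sigma1_195 : sigma1 195 = 336 := by decide

set_option maxHeartbeats 1600000


theorem surplus_lower_bound_abundant (n : ℕ) (hn : 0 < n) (hodd : Odd n)
    (hnondef : 2 * n ≤ sigma1 n)
    (hprim : ∀ d : ℕ, d ∣ n → d < n → sigma1 d < 2 * d)
    (habundant : 2 * n < sigma1 n) :
    S n > 2 * Real.log (24 * Real.sqrt 2 / 25) / Real.sqrt n := by
  classical
  have hn0 : n ≠ 0 := hn.ne'
  have hnR : (0:ℝ) < n := by exact_mod_cast hn
  have hφ : 0 < Nat.totient n := Nat.totient_pos.mpr hn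
  have hφR : (0:ℝ) < Nat.totient n := by exact_mod_cast hφ
  -- 2 φ(n) ≤ n
  have hB : 2 * Nat.totient n ≤ n := by
    have h1 := plain_bound hn0
    have h2 : Nat.totient n * (2*n) ≤ Nat.totient n * sigma1 n := Nat.mul_le_mul_left _ hnondef
    have h3 : 2 * Nat.totient n * n ≤ n * n := by
      calc 2 * Nat.totient n * n = Nat.totient n * (2*n) := by ring
        _ ≤ Nat.totient n * sigma1 n := h2
        _ ≤ n^2 := h1
        _ = n * n := sq n
    exact Nat.le_of_mul_le_mul_right h3 hn
  -- Euler product for φ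
  have hC : (Nat.totient n : ℝ) = n * ∏ p ∈ n.primeFactors, (1 - (p:ℝ)⁻¹) := by
    have h := Nat.totient_eq_mul_prod_factors n
    have h2 := congrArg (fun q : ℚ => (q:ℝ)) h
    push_cast at h2
    exact_mod_cast h2
  have hD : (∏ p ∈ n.primeFactors, (1 - (p:ℝ)⁻¹)) ≤ 1/2 := by
    have hBr : 2 * (Nat.totient n:ℝ) ≤ n := by exact_mod_cast hB
    rw [hC] at hBr
    nlinarith
  have hprime : ∀ p ∈ n.primeFactors, p.Prime := fun p hp => Nat.prime_of_mem_primeFactors hp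
  have hne2 : ∀ p ∈ n.primeFactors, p ≠ 2 := by
    intro p hp h2
    have hd : 2 ∣ n := h2 ▸ Nat.dvd_of_mem_primeFactors hp
    have ho := Nat.odd_iff.mp hodd
    omega
  have hsn : (0:ℝ) < Real.sqrt n := Real.sqrt_pos.mpr hnR
  -- constant comparison
  have hclog : 2 * Real.log (24 * Real.sqrt 2 / 25) ≤ Real.log 2 := by
    have hsq2 : Real.sqrt 2 ^ 2 = 2 := Real.sq_sqrt (by norm_num)
    have hpos : (0:ℝ) < 24 * Real.sqrt 2 / 25 := by positivity
    have he : 2 * Real.log (24 * Real.sqrt 2 / 25) = Real.log ((24 * Real.sqrt 2 / 25)^2) := by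
      rw [Real.log_pow]; push_cast; ring
    rw [he]
    apply Real.log_le_log (by positivity)
    nlinarith [hsq2]
  have hlog2 : Real.log 2 < 0.7 := lt_trans Real.log_two_lt_d9 (by norm_num)
  have hlog2' : (0:ℝ) ≤ Real.log 2 := Real.log_nonneg (by norm_num)
  rw [gt_iff_lt]
  have hred : 2 * Real.log (24 * Real.sqrt 2 / 25) / Real.sqrt n ≤ Real.log 2 / Real.sqrt n := by
    gcongr
  refine lt_of_le_of_lt hred ?_
  -- main case split
  rcases lt_or_ge n.primeFactors.card 4 with hcard | hcard
  · -- exactly 3 primes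
    have hc3 : n.primeFactors.card = 3 := by
      by_contra hcne
      have h012 : n.primeFactors.card = 0 ∨ n.primeFactors.card = 1 ∨
          n.primeFactors.card = 2 := by omega
      rcases h012 with h | h | h
      · have hP : n.primeFactors = ∅ := Finset.card_eq_zero.mp h
        have hone : n = 1 := by
          rcases Nat.primeFactors_eq_empty.mp hP with h1 | h1
          · omega
          · exact h1
        subst hone
        simp [Nat.totient_one] at hB
      · obtain ⟨a, hPa⟩ := Finset.card_eq_one.mp h
        have haP : a ∈ n.primeFactors := by rw [hPa]; simp
        have ha := hprime a haP
        have ha3 : 3 ≤ a := prime_ge3 ha (hne2 a haP)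
        rw [hPa, Finset.prod_singleton] at hD
        have hf := fac_le (m := 3) (by norm_num) ha3
        norm_num at hf
        linarith
      · obtain ⟨a, b, hab, hPab⟩ := Finset.card_eq_two.mp h
        have haP : a ∈ n.primeFactors := by rw [hPab]; simp
        have hbP : b ∈ n.primeFactors := by rw [hPab]; simp
        have ha := hprime a haP
        have hb := hprime b hbP
        have ha2 := hne2 a haP
        have hb2 := hne2 b hbP
        rw [hPab, Finset.prod_insert (by simp [hab]), Finset.prod_singleton] at hD
        rcases lt_or_gt_of_ne hab with hlt | hlt
        · exact pair2 ha hb ha2 hb2 hlt hD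
        · refine pair2 hb ha hb2 ha2 hlt ?_
          calc (1 - (b:ℝ)⁻¹) * (1 - (a:ℝ)⁻¹)
              = (1 - (a:ℝ)⁻¹) * (1 - (b:ℝ)⁻¹) := by ring
            _ ≤ 1/2 := hD
    obtain ⟨a, b, c, hab, hac, hbc, hP⟩ := Finset.card_eq_three.mp hc3
    have haP : a ∈ n.primeFactors := by rw [hP]; simp
    have hbP : b ∈ n.primeFactors := by rw [hP]; simp
    have hcP : c ∈ n.primeFactors := by rw [hP]; simp
    have ha := hprime a haP
    have hb := hprime b hbP
    have hc := hprime c hcP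
    have ha2 := hne2 a haP
    have hb2 := hne2 b hbP
    have hc2 := hne2 c hcP
    have hDabc : (1 - (a:ℝ)⁻¹) * (1 - (b:ℝ)⁻¹) * (1 - (c:ℝ)⁻¹) ≤ 1/2 := by
      rw [hP, Finset.prod_insert (by simp [hab, hac]), Finset.prod_insert (by simp [hbc]),
        Finset.prod_singleton, ← mul_assoc] at hD
      exact hD
    have hCabc : (Nat.totient n : ℝ)
        = n * ((1 - (a:ℝ)⁻¹) * (1 - (b:ℝ)⁻¹) * (1 - (c:ℝ)⁻¹)) := by
      rw [hC, hP, Finset.prod_insert (by simp [hab, hac]), Finset.prod_insert (by simp [hbc]),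
        Finset.prod_singleton, ← mul_assoc]
      ring
    have hda := Nat.dvd_of_mem_primeFactors haP
    have hdb := Nat.dvd_of_mem_primeFactors hbP
    have hdc := Nat.dvd_of_mem_primeFactors hcP
    have hmain : ∃ r : ℕ, (r = 7 ∨ r = 11 ∨ r = 13) ∧ (3:ℕ) ∣ n ∧ (5:ℕ) ∣ n ∧ r ∣ n ∧
        (Nat.totient n : ℝ) = n * ((1 - (3:ℝ)⁻¹) * (1 - (5:ℝ)⁻¹) * (1 - (r:ℝ)⁻¹)) := by
      rcases lt_trichotomy a b with h1 | h1 | h1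
      · rcases lt_trichotomy b c with h2 | h2 | h2
        · obtain ⟨e1, e2, e3⟩ := sorted3 ha hb hc ha2 hb2 hc2 h1 h2 hDabc
          subst e1; subst e2
          exact ⟨c, e3, hda, hdb, hdc, by rw [hCabc]; push_cast; ring⟩
        · exact absurd h2 hbc
        · rcases lt_trichotomy a c with h3 | h3 | h3
          · obtain ⟨e1, e2, e3⟩ := sorted3 ha hc hb ha2 hc2 hb2 h3 h2
              (by calc (1 - (a:ℝ)⁻¹) * (1 - (c:ℝ)⁻¹) * (1 - (b:ℝ)⁻¹)
                    = (1 - (a:ℝ)⁻¹) * (1 - (b:ℝ)⁻¹) * (1 - (c:ℝ)⁻¹) := by ring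
                _ ≤ 1/2 := hDabc)
            subst e1; subst e2
            exact ⟨b, e3, hda, hdc, hdb, by rw [hCabc]; push_cast; ring⟩
          · exact absurd h3 hac
          · obtain ⟨e1, e2, e3⟩ := sorted3 hc ha hb hc2 ha2 hb2 h3 h1
              (by calc (1 - (c:ℝ)⁻¹) * (1 - (a:ℝ)⁻¹) * (1 - (b:ℝ)⁻¹)
                    = (1 - (a:ℝ)⁻¹) * (1 - (b:ℝ)⁻¹) * (1 - (c:ℝ)⁻¹) := by ring
                _ ≤ 1/2 := hDabc)
            subst e1; subst e2
            exact ⟨b, e3, hdc, hda, hdb, by rw [hCabc]; push_cast; ring⟩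
      · exact absurd h1 hab
      · rcases lt_trichotomy a c with h2 | h2 | h2
        · obtain ⟨e1, e2, e3⟩ := sorted3 hb ha hc hb2 ha2 hc2 h1 h2
            (by calc (1 - (b:ℝ)⁻¹) * (1 - (a:ℝ)⁻¹) * (1 - (c:ℝ)⁻¹)
                  = (1 - (a:ℝ)⁻¹) * (1 - (b:ℝ)⁻¹) * (1 - (c:ℝ)⁻¹) := by ring
              _ ≤ 1/2 := hDabc)
          subst e1; subst e2
          exact ⟨c, e3, hdb, hda, hdc, by rw [hCabc]; push_cast; ring⟩
        · exact absurd h2 hac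
        · rcases lt_trichotomy b c with h3 | h3 | h3
          · obtain ⟨e1, e2, e3⟩ := sorted3 hb hc ha hb2 hc2 ha2 h3 h2
              (by calc (1 - (b:ℝ)⁻¹) * (1 - (c:ℝ)⁻¹) * (1 - (a:ℝ)⁻¹)
                    = (1 - (a:ℝ)⁻¹) * (1 - (b:ℝ)⁻¹) * (1 - (c:ℝ)⁻¹) := by ring
                _ ≤ 1/2 := hDabc)
            subst e1; subst e2
            exact ⟨a, e3, hdb, hdc, hda, by rw [hCabc]; push_cast; ring⟩
          · exact absurd h3 hbc
          · obtain ⟨e1, e2, e3⟩ := sorted3 hc hb ha hc2 hb2 ha2 h3 h1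
              (by calc (1 - (c:ℝ)⁻¹) * (1 - (b:ℝ)⁻¹) * (1 - (a:ℝ)⁻¹)
                    = (1 - (a:ℝ)⁻¹) * (1 - (b:ℝ)⁻¹) * (1 - (c:ℝ)⁻¹) := by ring
                _ ≤ 1/2 := hDabc)
            subst e1; subst e2
            exact ⟨a, e3, hdc, hdb, hda, by rw [hCabc]; push_cast; ring⟩
    obtain ⟨r, hr, hd3, hd5, hdr, hφr⟩ := hmain
    have h15 : 15 ∣ n := Nat.Coprime.mul_dvd_of_dvd_of_dvd (by decide) hd3 hd5
    have hSdef : S n = (n:ℝ)/(Nat.totient n : ℝ) - 2 := rfl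
    have hnRne : (n:ℝ) ≠ 0 := ne_of_gt hnR
    rcases hr with rfl | rfl | rfl
    · -- r = 7
      have h105 : (105:ℕ) ∣ n := by
        have h := Nat.Coprime.mul_dvd_of_dvd_of_dvd (show Nat.Coprime 15 7 by decide) h15 hdr
        simpa using h
      have hn105 : (105:ℝ) ≤ n := by exact_mod_cast Nat.le_of_dvd hn h105
      have hφval : (Nat.totient n : ℝ) = n * (16/35) := by rw [hφr]; norm_num
      have hSval : S n = 3/16 := by
        rw [hSdef, hφval]
        field_simp
        ring
      rw [hSval]
      have hsq : (10.2:ℝ) < Real.sqrt n := by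
        rw [Real.lt_sqrt (by norm_num)]
        nlinarith [hn105]
      calc Real.log 2 / Real.sqrt n
          ≤ 0.7 / Real.sqrt n := (div_le_div_iff_of_pos_right hsn).mpr hlog2.le
        _ < 0.7 / 10.2 := div_lt_div_of_pos_left (by norm_num) (by norm_num) hsq
        _ < 3/16 := by norm_num
    · -- r = 11
      have h165 : (165:ℕ) ∣ n := by
        have h := Nat.Coprime.mul_dvd_of_dvd_of_dvd (show Nat.Coprime 15 11 by decide) h15 hdr
        simpa using h
      have hn165 : (165:ℝ) ≤ n := by exact_mod_cast Nat.le_of_dvd hn h165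
      have hφval : (Nat.totient n : ℝ) = n * (16/33) := by rw [hφr]; norm_num
      have hSval : S n = 1/16 := by
        rw [hSdef, hφval]
        field_simp
        ring
      rw [hSval]
      have hsq : (12.8:ℝ) < Real.sqrt n := by
        rw [Real.lt_sqrt (by norm_num)]
        nlinarith [hn165]
      calc Real.log 2 / Real.sqrt n
          ≤ 0.7 / Real.sqrt n := (div_le_div_iff_of_pos_right hsn).mpr hlog2.le
        _ < 0.7 / 12.8 := div_lt_div_of_pos_left (by norm_num) (by norm_num) hsq
        _ < 1/16 := by norm_num
    · -- r = 13
      have h195 : (195:ℕ) ∣ n := by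
        have h := Nat.Coprime.mul_dvd_of_dvd_of_dvd (show Nat.Coprime 15 13 by decide) h15 hdr
        simpa using h
      obtain ⟨k, hk⟩ := h195
      have hk1 : k ≠ 1 := by
        rintro rfl
        rw [mul_one] at hk
        subst hk
        have hse : sigma1 195 = 336 := sigma1_195
        omega
      have hkodd : Odd k := by
        rw [hk] at hodd
        exact (Nat.odd_mul.mp hodd).2
      have hk3 : 3 ≤ k := by
        obtain ⟨t, ht⟩ := hkodd
        omega
      have hn585 : (585:ℝ) ≤ n := by
        have : (585:ℕ) ≤ n := by omega
        exact_mod_cast this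
      have hφval : (Nat.totient n : ℝ) = n * (32/65) := by rw [hφr]; norm_num
      have hSval : S n = 1/32 := by
        rw [hSdef, hφval]
        field_simp
        ring
      rw [hSval]
      have hsq : (24:ℝ) < Real.sqrt n := by
        rw [Real.lt_sqrt (by norm_num)]
        nlinarith [hn585]
      calc Real.log 2 / Real.sqrt n
          ≤ 0.7 / Real.sqrt n := (div_le_div_iff_of_pos_right hsn).mpr hlog2.le
        _ < 0.7 / 24 := div_lt_div_of_pos_left (by norm_num) (by norm_num) hsq
        _ < 1/32 := by norm_num
  · -- at least 4 distinct primes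
    have hPne : n.primeFactors.Nonempty := Finset.card_pos.mp (by omega)
    obtain ⟨p0, hp0, hmin⟩ := Finset.exists_min_image n.primeFactors
      (fun p => p ^ (n.factorization p)) hPne
    set q : ℕ := p0 ^ (n.factorization p0) with hqdef
    have hp0p : p0.Prime := hprime p0 hp0
    have hq1 : 1 ≤ q := Nat.one_le_pow _ _ hp0p.pos
    have hq4 : q^4 ≤ n := by
      have h1 : q ^ n.primeFactors.card ≤ ∏ p ∈ n.primeFactors, p ^ n.factorization p := by
        rw [← Finset.prod_const]
        exact Finset.prod_le_prod' (fun p hp => hmin p hp)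
      have h2 : ∏ p ∈ n.primeFactors, p ^ n.factorization p = n := by
        conv_rhs => rw [← Nat.factorization_prod_pow_eq_self hn0]
        rfl
      have h3 : q^4 ≤ q ^ n.primeFactors.card := Nat.pow_le_pow_right hq1 hcard
      omega
    have hg := global_bound hn0 hp0
    have hqq : p0 ^ (2 * n.factorization p0) = q^2 := pow_mul' p0 2 _
    rw [hqq] at hg
    have hnat : (q^2+1) * (Nat.totient n * (2*n)) ≤ q^2 * n^2 :=
      le_trans (Nat.mul_le_mul_left _ (Nat.mul_le_mul_left _ hnondef)) hg
    have hR : ((q:ℝ)^2+1) * ((Nat.totient n : ℝ) * (2*n)) ≤ (q:ℝ)^2 * (n:ℝ)^2 := by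
      exact_mod_cast hnat
    have hqR : (0:ℝ) < (q:ℝ)^2 := by
      have : (0:ℝ) < (q:ℝ) := by exact_mod_cast hq1
      positivity
    have hkey : 2 + 2/(q:ℝ)^2 ≤ (n:ℝ) / (Nat.totient n : ℝ) := by
      rw [le_div_iff₀ hφR]
      have hcancel : (2*((q:ℝ)^2+1)) * (Nat.totient n : ℝ) ≤ (q:ℝ)^2 * n := by
        nlinarith [hR, hnR]
      calc (2 + 2/(q:ℝ)^2) * (Nat.totient n : ℝ)
          = (2*((q:ℝ)^2+1)) * (Nat.totient n : ℝ) / (q:ℝ)^2 := by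
            rw [eq_div_iff (ne_of_gt hqR)]
            field_simp
        _ ≤ (q:ℝ)^2 * n / (q:ℝ)^2 := by gcongr
        _ = n := mul_div_cancel_left₀ _ (ne_of_gt hqR)
    have hq2n : ((q:ℝ))^2 ≤ Real.sqrt n := by
      rw [Real.le_sqrt (by positivity) (by positivity)]
      have h5 : ((q:ℝ)^2)^2 = ((q^4 : ℕ) : ℝ) := by push_cast; ring
      rw [h5]
      exact_mod_cast hq4
    have hfin : 2 / Real.sqrt n ≤ 2 / (q:ℝ)^2 := by gcongr
    have hSn : 2/(q:ℝ)^2 ≤ S n := by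
      have hs : S n = (n:ℝ)/(Nat.totient n : ℝ) - 2 := rfl
      rw [hs]; linarith [hkey]
    calc Real.log 2 / Real.sqrt n
        < 2 / Real.sqrt n := by exact (div_lt_div_iff_of_pos_right hsn).mpr (by linarith)
      _ ≤ 2/(q:ℝ)^2 := hfin
      _ ≤ S n := hSn
end

section
/- If n is an odd non-deficient number with exactly k distinct prime factors, then H(n) ≥ 2 + (4/3)·n^(−2/k). -/
private lemma one_add_sum_le_prod_aux (s : Finset ℕ) (f : ℕ → ℝ) (hf : ∀ i ∈ s, 0 ≤ f i) :
    1 + ∑ i ∈ s, f i ≤ ∏ i ∈ s, (1 + f i) := by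
  induction s using Finset.cons_induction with
  | empty => simp
  | cons a s ha ih =>
    rw [Finset.sum_cons, Finset.prod_cons]
    have h1 : 0 ≤ f a := hf a (Finset.mem_cons_self _ _)
    have h2 : ∀ i ∈ s, 0 ≤ f i := fun i hi => hf i (Finset.mem_cons_of_mem hi)
    have h3 := ih h2
    have h4 : (0:ℝ) ≤ ∑ i ∈ s, f i := Finset.sum_nonneg h2
    nlinarith

theorem H_lower_bound_odd_nondeficient (n : ℕ) (hn : 0 < n) (hodd : Odd n)
    (hnondef : 2 * n ≤ sigma1 n) (k : ℕ) (hk : k = n.primeFactors.card) :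
    H n ≥ 2 + (4 / 3) * (n : ℝ) ^ (-(2 / (k : ℝ))) := by
  -- n > 1
  have hn1 : 1 < n := by
    by_contra h
    have hn' : n = 1 := by omega
    subst hn'
    simp [sigma1] at hnondef
  have hne : n ≠ 0 := hn.ne'
  set P := n.primeFactors with hP
  have hPne : P.Nonempty := (Nat.nonempty_primeFactors).2 hn1
  have hk1 : 1 ≤ k := by rw [hk]; exact Finset.card_pos.2 hPne
  have hkR : (0:ℝ) < (k:ℝ) := by exact_mod_cast hk1
  set e : ℕ → ℕ := fun p => n.factorization p with he
  -- basic facts about primes in P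
  have hprime : ∀ p ∈ P, Nat.Prime p := fun p hp => Nat.prime_of_mem_primeFactors hp
  have hp2 : ∀ p ∈ P, (2:ℝ) ≤ (p:ℝ) := fun p hp => by
    exact_mod_cast (hprime p hp).two_le
  have hp1 : ∀ p ∈ P, (1:ℝ) < (p:ℝ) := fun p hp => lt_of_lt_of_le one_lt_two (hp2 p hp)
  have hee : ∀ p ∈ P, 1 ≤ e p := fun p hp => by
    have := Nat.mem_primeFactors.1 hp
    exact (Nat.Prime.factorization_pos_of_dvd this.1 hne this.2.1)
  -- g p = p ^ (e p + 1)
  set g : ℕ → ℝ := fun p => (p:ℝ) ^ (e p + 1) with hg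
  have hg1 : ∀ p ∈ P, (2:ℝ) ≤ g p := fun p hp => by
    calc (2:ℝ) ≤ (p:ℝ) := hp2 p hp
    _ = (p:ℝ) ^ 1 := (pow_one _).symm
    _ ≤ (p:ℝ) ^ (e p + 1) := pow_le_pow_right₀ (le_of_lt (hp1 p hp)) (by omega)
  have hg0 : ∀ p ∈ P, (0:ℝ) < g p := fun p hp => lt_of_lt_of_le two_pos (hg1 p hp)
  have hgm1 : ∀ p ∈ P, (0:ℝ) < g p - 1 := fun p hp => by have := hg1 p hp; linarith
  -- n as a product
  have hnprod : (n:ℝ) = ∏ p ∈ P, (p:ℝ) ^ (e p) := by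
    conv_lhs => rw [← Nat.factorization_prod_pow_eq_self hne]
    rw [Finsupp.prod, Nat.support_factorization]
    push_cast
    rfl
  -- totient as a product
  have hphi : (Nat.totient n : ℝ) * ∏ p ∈ P, (p:ℝ) = (n:ℝ) * ∏ p ∈ P, ((p:ℝ) - 1) := by
    have := Nat.totient_mul_prod_primeFactors n
    have h2 : ((Nat.totient n * ∏ p ∈ P, p : ℕ) : ℝ) = ((n * ∏ p ∈ P, (p - 1) : ℕ) : ℝ) := by
      exact_mod_cast congrArg (Nat.cast (R := ℝ)) this
    push_cast at h2
    rw [h2]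
    congr 1
    exact Finset.prod_congr rfl fun p hp => by
      rw [Nat.cast_sub (hprime p hp).one_lt.le]; norm_num
  -- sigma as product
  have hq1 : (0:ℝ) < ∏ p ∈ P, ((p:ℝ)-1) :=
    Finset.prod_pos fun p hp => by have := hp1 p hp; linarith
  have hsig : (sigma1 n : ℝ) * ∏ p ∈ P, ((p:ℝ) - 1) = ∏ p ∈ P, (g p - 1) := by
    have h0 := Nat.sum_divisors hne
    have h1 : (sigma1 n : ℝ) = ∏ p ∈ P, ∑ j ∈ Finset.range (e p + 1), (p:ℝ) ^ j := by
      rw [sigma1, h0]; push_cast; rfl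
    rw [h1, ← Finset.prod_mul_distrib]
    refine Finset.prod_congr rfl fun p hp => ?_
    have hx : (p:ℝ) ≠ 1 := ne_of_gt (hp1 p hp)
    have hx1 : (p:ℝ) - 1 ≠ 0 := by have := hp1 p hp; intro h; linarith
    rw [geom_sum_eq hx]
    field_simp
    rfl
  have hphipos : (0:ℝ) < Nat.totient n := by exact_mod_cast Nat.totient_pos.mpr hn
  have hHval : H n = (∏ p ∈ P, (p:ℝ)) / ∏ p ∈ P, ((p:ℝ)-1) := by
    rw [H, div_eq_div_iff hphipos.ne' hq1.ne']
    linarith [hphi]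
  have hsigval : (sigma1 n : ℝ) = (∏ p ∈ P, (g p - 1)) / ∏ p ∈ P, ((p:ℝ)-1) :=
    eq_div_of_mul_eq hq1.ne' hsig
  have hnH : (n:ℝ) * H n = (∏ p ∈ P, g p) / ∏ p ∈ P, ((p:ℝ)-1) := by
    rw [hHval, hnprod, ← mul_div_assoc, ← Finset.prod_mul_distrib]
    congr 1
  have hgpos : (0:ℝ) < ∏ p ∈ P, g p := Finset.prod_pos hg0
  have hgm1pos : (0:ℝ) < ∏ p ∈ P, (g p - 1) := Finset.prod_pos hgm1
  have hnR : (0:ℝ) < (n:ℝ) := by exact_mod_cast hn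
  have A : (n:ℝ) * H n * (∏ p ∈ P, (g p - 1)) = (sigma1 n : ℝ) * ∏ p ∈ P, g p := by
    rw [hnH, hsigval]; field_simp
  have key : 2 * ∏ p ∈ P, g p ≤ H n * ∏ p ∈ P, (g p - 1) := by
    have h2n : (2:ℝ) * n ≤ sigma1 n := by exact_mod_cast hnondef
    refine (mul_le_mul_iff_right₀ hnR).1 ?_
    calc (n:ℝ) * (2 * ∏ p ∈ P, g p) = 2 * (n:ℝ) * ∏ p ∈ P, g p := by ring
    _ ≤ (sigma1 n : ℝ) * ∏ p ∈ P, g p := mul_le_mul_of_nonneg_right h2n hgpos.le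
    _ = (n:ℝ) * H n * ∏ p ∈ P, (g p - 1) := A.symm
    _ = (n:ℝ) * (H n * ∏ p ∈ P, (g p - 1)) := by ring
  -- step: prod (1 + g⁻¹) ≤ prod (g/(g-1)) and H ≥ 2 * that
  have hstep1 : ∏ p ∈ P, (1 + (g p)⁻¹) ≤ ∏ p ∈ P, (g p / (g p - 1)) := by
    refine Finset.prod_le_prod (fun p hp => by positivity) (fun p hp => ?_)
    rw [le_div_iff₀ (hgm1 p hp)]
    have h0 := hg0 p hp
    have h1 : (g p)⁻¹ * g p = 1 := inv_mul_cancel₀ h0.ne'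
    have h2 : (0:ℝ) ≤ (g p)⁻¹ := inv_nonneg.2 h0.le
    nlinarith
  have hstep2 : 2 * ∏ p ∈ P, (1 + (g p)⁻¹) ≤ H n := by
    have h1 : ∏ p ∈ P, (g p / (g p - 1)) = (∏ p ∈ P, g p) / ∏ p ∈ P, (g p - 1) :=
      Finset.prod_div_distrib _ _
    calc 2 * ∏ p ∈ P, (1 + (g p)⁻¹) ≤ 2 * ((∏ p ∈ P, g p) / ∏ p ∈ P, (g p - 1)) := by
          rw [← h1]; linarith [hstep1]
    _ ≤ H n := by
          rw [show (2:ℝ) * ((∏ p ∈ P, g p) / ∏ p ∈ P, (g p - 1))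
              = (2 * ∏ p ∈ P, g p) / ∏ p ∈ P, (g p - 1) by ring,
            div_le_iff₀ hgm1pos]
          exact key
  -- AM-GM part
  set t : ℝ := (n:ℝ) ^ (-(2 / (k:ℝ))) with ht
  have htpos : 0 < t := Real.rpow_pos_of_pos hnR _
  have hz : ∀ p ∈ P, (0:ℝ) ≤ (g p)⁻¹ := fun p hp => inv_nonneg.2 (hg0 p hp).le
  have hsum : (k:ℝ) * t ≤ ∑ p ∈ P, (g p)⁻¹ := by
    have hw : ∑ _p ∈ P, (1/(k:ℝ)) = 1 := by
      rw [Finset.sum_const, nsmul_eq_mul, ← hk]; field_simp [hkR.ne']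
    have hAM := Real.geom_mean_le_arith_mean_weighted P (fun _ => 1/(k:ℝ))
      (fun p => (g p)⁻¹) (fun p _ => by positivity) hw hz
    rw [Real.finset_prod_rpow P _ hz] at hAM
    have hprodg : (∏ p ∈ P, g p) ≤ (n:ℝ)^2 := by
      have hn2 : (n:ℝ)^2 = ∏ p ∈ P, ((p:ℝ)^(e p))^2 := by rw [hnprod, ← Finset.prod_pow]
      rw [hn2]
      refine Finset.prod_le_prod (fun p hp => (hg0 p hp).le) (fun p hp => ?_)
      rw [← pow_mul]
      exact pow_le_pow_right₀ (hp1 p hp).le (by have := hee p hp; omega)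
    have hinv : ((n:ℝ)^2)⁻¹ ≤ ∏ p ∈ P, (g p)⁻¹ := by
      rw [Finset.prod_inv_distrib]
      exact inv_anti₀ hgpos hprodg
    have ht2 : t = (((n:ℝ)^2)⁻¹) ^ ((1:ℝ)/(k:ℝ)) := by
      rw [ht, ← Real.rpow_natCast ((n:ℝ)) 2, ← Real.rpow_neg hnR.le,
        ← Real.rpow_mul hnR.le]
      norm_num [div_eq_mul_inv]
    have hmono : t ≤ (∏ p ∈ P, (g p)⁻¹) ^ ((1:ℝ)/(k:ℝ)) := by
      rw [ht2]
      exact Real.rpow_le_rpow (by positivity) hinv (by positivity)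
    have h3 : t ≤ ∑ p ∈ P, 1/(k:ℝ) * (g p)⁻¹ := le_trans hmono hAM
    have h4 : ∑ p ∈ P, 1/(k:ℝ) * (g p)⁻¹ = (∑ p ∈ P, (g p)⁻¹) / k := by
      rw [Finset.sum_div]
      exact Finset.sum_congr rfl fun p _ => by ring
    rw [h4, le_div_iff₀ hkR] at h3
    linarith
  -- conclude
  have hsumprod : 1 + ∑ p ∈ P, (g p)⁻¹ ≤ ∏ p ∈ P, (1 + (g p)⁻¹) :=
    one_add_sum_le_prod_aux P _ hz
  have hk1R : (1:ℝ) ≤ (k:ℝ) := by exact_mod_cast hk1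
  have : 2 + 2 * ((k:ℝ) * t) ≤ H n := by
    calc 2 + 2 * ((k:ℝ) * t) ≤ 2 * (1 + ∑ p ∈ P, (g p)⁻¹) := by linarith [hsum]
    _ ≤ 2 * ∏ p ∈ P, (1 + (g p)⁻¹) := by linarith [hsumprod]
    _ ≤ H n := hstep2
  have hlast : (4/3:ℝ) * t ≤ 2 * ((k:ℝ) * t) := by nlinarith
  rw [ge_iff_le]
  linarith
end

section
/- The function f(x) = x·log(x/(2(x−1))) is strictly decreasing on the interval (1, ∞); that is, for all real numbers x, y with 1 < x < y, f(y) < f(x). -/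
lemma xlog_hasDerivAt (z : ℝ) (hz : 1 < z) :
    HasDerivAt (fun x : ℝ => x * Real.log (x / (2 * (x - 1))))
      (Real.log (z / (2 * (z - 1))) - 1 / (z - 1)) z := by
  have hz1 : z - 1 > 0 := by linarith
  have hden : (2 : ℝ) * (z - 1) ≠ 0 := by positivity
  have hg : HasDerivAt (fun x : ℝ => x / (2 * (x - 1)))
      ((1 * (2 * (z - 1)) - z * 2) / (2 * (z - 1)) ^ 2) z := by
    have hd : HasDerivAt (fun x : ℝ => 2 * (x - 1)) 2 z := by
      simpa using ((hasDerivAt_id z).sub_const 1).const_mul 2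
    exact (hasDerivAt_id z).div hd hden
  have hgz : z / (2 * (z - 1)) ≠ 0 := by positivity
  have hlog := hg.log hgz
  have hf := (hasDerivAt_id z).mul hlog
  refine hf.congr_deriv ?_
  simp only [id_eq]
  field_simp
  ring

theorem xlog_strictly_decreasing (x y : ℝ) (hx : 1 < x) (hxy : x < y) :
    y * Real.log (y / (2 * (y - 1))) < x * Real.log (x / (2 * (x - 1))) := by
  have key : StrictAntiOn (fun x : ℝ => x * Real.log (x / (2 * (x - 1)))) (Set.Ioi 1) := by
    apply strictAntiOn_of_deriv_neg (convex_Ioi 1)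
    · intro z hz
      exact (xlog_hasDerivAt z hz).differentiableAt.continuousAt.continuousWithinAt
    · intro z hz
      rw [interior_Ioi] at hz
      rw [(xlog_hasDerivAt z hz).deriv]
      have hz1 : z - 1 > 0 := by linarith [Set.mem_Ioi.mp hz]
      have hz0 : (0:ℝ) < z := by linarith
      have hzpos : (0:ℝ) < z / (2 * (z - 1)) := by positivity
      have hle := Real.log_le_sub_one_of_pos hzpos
      have h2 : z / (2 * (z - 1)) - 1 - 1 / (z - 1) < 0 := by
        have heq : z / (2 * (z - 1)) - 1 - 1 / (z - 1) = (-z) / (2 * (z - 1)) := by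
          field_simp
          ring
        rw [heq]
        apply div_neg_of_neg_of_pos (by linarith) (by positivity)
      linarith
  exact key (Set.mem_Ioi.mpr hx) (Set.mem_Ioi.mpr (hx.trans hxy)) hxy
end

section
/- Let n be a non-deficient number with smallest prime factor p and with exactly k distinct prime factors. Then k ≥ p. -/
open Finset

private lemma my_geom_lt (r : ℕ) : ∀ a : ℕ,
    (∑ i ∈ range (a + 1), (r + 2) ^ i) * (r + 1) < (r + 2) ^ (a + 1) := by
  intro a
  induction a with
  | zero => simp
  | succ a ih =>
      rw [Finset.sum_range_succ, add_mul, pow_succ (r + 2) (a + 1)]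
      have hb : 0 < (r + 2) ^ (a + 1) := Nat.pow_pos (by omega)
      nlinarith [ih]

private lemma telescope (S : Finset ℕ) : ∀ m : ℕ, 1 ≤ m → (∀ q ∈ S, m ≤ q) →
    (m - 1) * ∏ q ∈ S, q ≤ (m - 1 + S.card) * ∏ q ∈ S, (q - 1) := by
  induction S using Finset.strongInduction with
  | _ S ih =>
    intro m hm hS
    rcases S.eq_empty_or_nonempty with rfl | hne
    · simp
    · set q0 := S.min' hne with hq0
      have hq0S : q0 ∈ S := S.min'_mem hne
      have hmq0 : m ≤ q0 := hS q0 hq0S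
      set T := S.erase q0 with hT
      have hTsub : T ⊂ S := Finset.erase_ssubset hq0S
      have hTge : ∀ q ∈ T, q0 + 1 ≤ q := by
        intro q hq
        have h1 : q0 ≤ q := S.min'_le q (Finset.mem_of_mem_erase hq)
        have h2 : q ≠ q0 := Finset.ne_of_mem_erase hq
        omega
      have IH := ih T hTsub (q0 + 1) (by omega) hTge
      simp only [Nat.add_sub_cancel] at IH
      have hprod : ∏ q ∈ S, q = q0 * ∏ q ∈ T, q := (Finset.mul_prod_erase S _ hq0S).symm
      have hprod' : ∏ q ∈ S, (q - 1) = (q0 - 1) * ∏ q ∈ T, (q - 1) :=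
        (Finset.mul_prod_erase S _ hq0S).symm
      have hcard : S.card = T.card + 1 := by
        rw [hT, Finset.card_erase_of_mem hq0S]
        have : 0 < S.card := Finset.card_pos.mpr hne
        omega
      rw [hprod, hprod', hcard]
      calc (m - 1) * (q0 * ∏ q ∈ T, q) = (m - 1) * (q0 * ∏ q ∈ T, q) := rfl
        _ ≤ (m - 1) * ((q0 + T.card) * ∏ q ∈ T, (q - 1)) :=
            Nat.mul_le_mul_left _ IH
        _ ≤ (m - 1 + (T.card + 1)) * ((q0 - 1) * ∏ q ∈ T, (q - 1)) := by
            rw [← mul_assoc, ← mul_assoc]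
            apply Nat.mul_le_mul_right
            have hq1 : q0 = (q0 - 1) + 1 := by omega
            set t := T.card
            set q1 := q0 - 1 with hq1def
            obtain ⟨m', rfl⟩ : ∃ m', m = m' + 1 := ⟨m - 1, by omega⟩
            have hmq1 : m' ≤ q1 := by omega
            rw [hq1]
            simp only [Nat.add_sub_cancel]
            nlinarith [hmq1]

theorem card_primeFactors_ge_minFac (n : ℕ) (hn : 0 < n)
    (hnondef : 2 * n ≤ sigma1 n) :
    n.primeFactors.card ≥ n.minFac := by
  -- n = 1 is impossible
  rcases eq_or_lt_of_le (Nat.one_le_iff_ne_zero.mpr hn.ne') with h1 | h1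
  · exfalso; rw [← h1] at hnondef; simp [sigma1] at hnondef
  have hne : n ≠ 0 := hn.ne'
  set p := n.minFac with hp
  have hpprime : p.Prime := Nat.minFac_prime (by omega)
  have hp2 : 2 ≤ p := hpprime.two_le
  set k := n.primeFactors.card with hk
  have hPFne : n.primeFactors.Nonempty := Nat.nonempty_primeFactors.mpr h1
  have hqprime : ∀ q ∈ n.primeFactors, q.Prime := fun q hq => Nat.prime_of_mem_primeFactors hq
  have hpq : ∀ q ∈ n.primeFactors, p ≤ q := fun q hq =>
    Nat.minFac_le_of_dvd (hqprime q hq).two_le (Nat.dvd_of_mem_primeFactors hq)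
  -- decomposition of sigma1
  have hsig : sigma1 n = ∏ q ∈ n.primeFactors, ∑ i ∈ range (n.factorization q + 1), q ^ i := by
    have := (ArithmeticFunction.isMultiplicative_sigma (k := 1)).multiplicative_factorization
      _ hne
    rw [show sigma1 n = ArithmeticFunction.sigma 1 n from
      (ArithmeticFunction.sigma_one_apply n).symm, this]
    rw [Finsupp.prod, Nat.support_factorization]
    apply Finset.prod_congr rfl
    intro q hq
    rw [ArithmeticFunction.sigma_one_apply, Nat.sum_divisors_prime_pow (hqprime q hq)]
  have hnprod : n = ∏ q ∈ n.primeFactors, q ^ n.factorization q := by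
    conv_lhs => rw [← Nat.factorization_prod_pow_eq_self hne]
    rw [Finsupp.prod, Nat.support_factorization]
  -- key strict inequality
  have key : sigma1 n * ∏ q ∈ n.primeFactors, (q - 1) < n * ∏ q ∈ n.primeFactors, q := by
    have key' : (∏ q ∈ n.primeFactors, ∑ i ∈ range (n.factorization q + 1), q ^ i) *
        ∏ q ∈ n.primeFactors, (q - 1) <
        (∏ q ∈ n.primeFactors, q ^ n.factorization q) * ∏ q ∈ n.primeFactors, q := by
      rw [← Finset.prod_mul_distrib, ← Finset.prod_mul_distrib]
      apply Finset.prod_lt_prod_of_nonempty _ _ hPFne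
      · intro q hq
        have h2q := (hqprime q hq).two_le
        have : 0 < ∑ i ∈ range (n.factorization q + 1), q ^ i := by
          apply Finset.sum_pos
          · intro i _; exact Nat.pow_pos (by omega)
          · exact ⟨0, Finset.mem_range.mpr (by omega)⟩
        exact Nat.mul_pos this (by omega)
      · intro q hq
        have h2q := (hqprime q hq).two_le
        obtain ⟨r, rfl⟩ : ∃ r, q = r + 2 := ⟨q - 2, by omega⟩
        have := my_geom_lt r (n.factorization (r + 2))
        calc (∑ i ∈ range (n.factorization (r+2) + 1), (r+2) ^ i) * (r + 2 - 1)
            = (∑ i ∈ range (n.factorization (r+2) + 1), (r+2) ^ i) * (r + 1) := by norm_num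
          _ < (r + 2) ^ (n.factorization (r+2) + 1) := this
          _ = (r + 2) ^ (n.factorization (r+2)) * (r + 2) := by rw [pow_succ]
    rw [← hsig, ← hnprod] at key'
    exact key'
  -- cancel n
  have hQpos : 0 < ∏ q ∈ n.primeFactors, (q - 1) := by
    apply Finset.prod_pos
    intro q hq
    have := (hqprime q hq).two_le
    omega
  have key2 : 2 * ∏ q ∈ n.primeFactors, (q - 1) < ∏ q ∈ n.primeFactors, q := by
    have h3 : n * (2 * ∏ q ∈ n.primeFactors, (q - 1)) < n * ∏ q ∈ n.primeFactors, q := by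
      calc n * (2 * ∏ q ∈ n.primeFactors, (q - 1))
          = (2 * n) * ∏ q ∈ n.primeFactors, (q - 1) := by ring
        _ ≤ sigma1 n * ∏ q ∈ n.primeFactors, (q - 1) := Nat.mul_le_mul_right _ hnondef
        _ < n * ∏ q ∈ n.primeFactors, q := key
    exact Nat.lt_of_mul_lt_mul_left h3
  have htel := telescope n.primeFactors p (by omega) hpq
  -- combine
  have final : (p - 1) * (2 * ∏ q ∈ n.primeFactors, (q - 1)) <
      (p - 1 + k) * ∏ q ∈ n.primeFactors, (q - 1) := by
    calc (p - 1) * (2 * ∏ q ∈ n.primeFactors, (q - 1))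
        < (p - 1) * ∏ q ∈ n.primeFactors, q :=
          mul_lt_mul_of_pos_left key2 (show (0:ℕ) < p - 1 by omega)
      _ ≤ (p - 1 + k) * ∏ q ∈ n.primeFactors, (q - 1) := htel
  have h4 : ((p - 1) * 2) * ∏ q ∈ n.primeFactors, (q - 1) <
      (p - 1 + k) * ∏ q ∈ n.primeFactors, (q - 1) := by
    calc ((p - 1) * 2) * ∏ q ∈ n.primeFactors, (q - 1)
        = (p - 1) * (2 * ∏ q ∈ n.primeFactors, (q - 1)) := by ring
      _ < (p - 1 + k) * ∏ q ∈ n.primeFactors, (q - 1) := final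
  have h5 : (p - 1) * 2 < p - 1 + k := Nat.lt_of_mul_lt_mul_right h4
  omega
end

section
/- Let n = p₁^{a₁}·p₂^{a₂}···p_k^{a_k} be an odd non-deficient number, where p₁, …, p_k are distinct primes and each aᵢ ≥ 1. Let j be an index with 1 ≤ j ≤ k such that p_j^{a_j+1} ≤ pᵢ^{aᵢ+1} for every i with 1 ≤ i ≤ k. Then H(n) ≥ 2 + (4/3)·(1/p_j^{a_j+1}). -/
theorem H_lower_bound_of_min_prime_power_odd (n : ℕ) (hn : 0 < n) (hodd : Odd n)
    (hnondef : 2 * n ≤ sigma1 n)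
    (q : ℕ) (hq : q ∈ n.primeFactors)
    (hmin : ∀ p ∈ n.primeFactors,
      q ^ (n.factorization q + 1) ≤ p ^ (n.factorization p + 1)) :
    H n ≥ 2 + (4 / 3) * (1 / (q ^ (n.factorization q + 1) : ℝ)) := by
  set S := n.primeFactors with hS
  set e : ℕ → ℕ := fun p => n.factorization p with he
  -- basic facts about primes in S
  have hprime : ∀ p ∈ S, p.Prime := fun p hp => Nat.prime_of_mem_primeFactors hp
  have hepos : ∀ p ∈ S, 1 ≤ e p := fun p hp =>
    Nat.Prime.factorization_pos_of_dvd (hprime p hp) hn.ne' (Nat.dvd_of_mem_primeFactors hp)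
  have hp2 : ∀ p ∈ S, (2 : ℝ) ≤ (p : ℝ) := fun p hp => by
    exact_mod_cast (hprime p hp).two_le
  -- real-valued per-prime quantities
  set N : ℕ → ℝ := fun p => (p : ℝ) ^ (e p) with hN
  set F : ℕ → ℝ := fun p => (p : ℝ) / ((p : ℝ) - 1) with hF
  set G : ℕ → ℝ := fun p => 1 - ((p : ℝ) ^ (e p + 1))⁻¹ with hG
  -- n as a product
  have hnprod : (n : ℝ) = ∏ p ∈ S, N p := by
    conv_lhs => rw [← Nat.factorization_prod_pow_eq_self hn.ne']
    rw [Nat.prod_factorization_eq_prod_primeFactors]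
    push_cast
    rfl
  -- totient as a product
  have hφprod : (Nat.totient n : ℝ) = ∏ p ∈ S, N p / F p := by
    rw [Nat.totient_eq_prod_factorization hn.ne', Nat.prod_factorization_eq_prod_primeFactors]
    push_cast
    refine Finset.prod_congr rfl fun p hp => ?_
    have h2 := hp2 p hp
    have h1 := hepos p hp
    have hpne : (p : ℝ) ≠ 0 := by linarith
    have hpm1 : (p : ℝ) - 1 ≠ 0 := by linarith
    have hp1 : (1 : ℕ) ≤ p := by exact_mod_cast (by linarith : (1:ℝ) ≤ (p:ℝ))
    rw [Nat.cast_sub hp1, Nat.cast_one]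
    simp only [hN, hF, he]
    rw [show (p:ℝ) ^ (n.factorization p - 1) = (p:ℝ) ^ (n.factorization p) / p from by
      rw [eq_div_iff hpne, ← pow_succ, Nat.sub_add_cancel h1]]
    field_simp
  -- sigma as a product
  have hσprod : (sigma1 n : ℝ) = ∏ p ∈ S, N p * F p * G p := by
    rw [sigma1, Nat.sum_divisors hn.ne']
    push_cast
    refine Finset.prod_congr rfl fun p hp => ?_
    have h2 := hp2 p hp
    have hpne1 : (p : ℝ) ≠ 1 := by linarith
    have hpne : (p : ℝ) ≠ 0 := by linarith
    have hpm1 : (p : ℝ) - 1 ≠ 0 := by linarith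
    have hpk : (p : ℝ) ^ (n.factorization p) ≠ 0 := pow_ne_zero _ hpne
    rw [geom_sum_eq hpne1]
    simp only [hN, hF, hG, he]
    rw [show (1:ℝ) - ((p:ℝ) ^ (n.factorization p + 1))⁻¹
        = ((p:ℝ) ^ (n.factorization p + 1) - 1) / (p:ℝ) ^ (n.factorization p + 1) from by
      field_simp]
    rw [pow_succ]
    field_simp
  -- positivity
  have hNpos : ∀ p ∈ S, 0 < N p := fun p hp => pow_pos (by linarith [hp2 p hp]) _
  have hFpos : ∀ p ∈ S, 0 < F p := fun p hp =>
    div_pos (by linarith [hp2 p hp]) (by linarith [hp2 p hp])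
  have hGmem : ∀ p ∈ S, 0 < G p ∧ G p ≤ 1 := by
    intro p hp
    have h2 := hp2 p hp
    have hpow : (1 : ℝ) < (p : ℝ) ^ (e p + 1) := one_lt_pow₀ (by linarith) (by omega)
    have hinv : ((p : ℝ) ^ (e p + 1))⁻¹ < 1 := inv_lt_one_of_one_lt₀ hpow
    have hinvpos : 0 < ((p : ℝ) ^ (e p + 1))⁻¹ := inv_pos.mpr (by linarith)
    constructor <;> [skip; skip] <;> simp only [hG] <;> linarith
  have hnR : (0 : ℝ) < n := by exact_mod_cast hn
  have hφR : (0 : ℝ) < Nat.totient n := by exact_mod_cast Nat.totient_pos.mpr hn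
  -- H n = ∏ F p
  have hHprod : H n = ∏ p ∈ S, F p := by
    have hprodN : (0 : ℝ) < ∏ p ∈ S, N p := Finset.prod_pos hNpos
    have hprodF : (0 : ℝ) < ∏ p ∈ S, F p := Finset.prod_pos hFpos
    rw [H, hnprod, hφprod, Finset.prod_div_distrib]
    field_simp
  -- 2 ≤ H n * ∏ G p
  have hkey : (2 : ℝ) ≤ H n * ∏ p ∈ S, G p := by
    have h1 : (2 : ℝ) * n ≤ sigma1 n := by exact_mod_cast hnondef
    have h2 : (sigma1 n : ℝ) = (n : ℝ) * (H n * ∏ p ∈ S, G p) := by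
      rw [hσprod, hHprod, hnprod, ← Finset.prod_mul_distrib, ← Finset.prod_mul_distrib]
      exact Finset.prod_congr rfl fun p _ => by ring
    rw [h2] at h1
    have := (mul_le_mul_iff_right₀ hnR).mp (by linarith : n * 2 ≤ (n:ℝ) * (H n * ∏ p ∈ S, G p))
    linarith
  -- bound the product of G by G q
  have hGq : ∏ p ∈ S, G p ≤ G q := by
    rw [← Finset.mul_prod_erase S G hq]
    have hle1 : ∏ p ∈ S.erase q, G p ≤ 1 :=
      Finset.prod_le_one (fun p hp => (hGmem p (Finset.mem_of_mem_erase hp)).1.le)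
        (fun p hp => (hGmem p (Finset.mem_of_mem_erase hp)).2)
    have hge0 : 0 ≤ ∏ p ∈ S.erase q, G p :=
      Finset.prod_nonneg fun p hp => (hGmem p (Finset.mem_of_mem_erase hp)).1.le
    nlinarith [(hGmem q hq).1]
  -- finish
  have hHpos : 0 < H n := div_pos hnR hφR
  set x : ℝ := ((q : ℝ) ^ (e q + 1))⁻¹ with hx
  have hGqx : G q = 1 - x := rfl
  have hxmem := hGmem q hq
  rw [hGqx] at hxmem
  have hx1 : x < 1 := by linarith [hxmem.1]
  have hx0 : 0 < x := by
    rw [hx]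
    exact inv_pos.mpr (pow_pos (by linarith [hp2 q hq]) _)
  have h2H : (2 : ℝ) ≤ H n * (1 - x) := by
    calc (2:ℝ) ≤ H n * ∏ p ∈ S, G p := hkey
    _ ≤ H n * (1 - x) := by
        rw [← hGqx]; exact mul_le_mul_of_nonneg_left hGq hHpos.le
  have hgoal : H n ≥ 2 + (4 / 3) * x := by nlinarith
  have : (1 / (q ^ (n.factorization q + 1) : ℝ)) = x := by
    rw [hx, one_div]
  rw [this]
  exact hgoal
end

section
/- Let n = p₁^{a₁}·p₂^{a₂}···p_k^{a_k} be an even non-deficient number, where p₁, …, p_k are distinct primes and each aᵢ ≥ 1. Let j be an index with 1 ≤ j ≤ k such that p_j^{a_j+1} ≤ pᵢ^{aᵢ+1} for every i with 1 ≤ i ≤ k. Then either p_j = 2 or H(n) ≥ 2 + (7/4)·(1/p_j^{a_j+1}). -/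
lemma geom_aux (p a : ℕ) :
    p * (∑ k ∈ Finset.range (a + 1), p ^ k) + 1
      = (∑ k ∈ Finset.range (a + 1), p ^ k) + p ^ (a + 1) := by
  induction a with
  | zero => simp [Nat.add_comm]
  | succ a ih =>
    rw [Finset.sum_range_succ]
    calc p * ((∑ k ∈ Finset.range (a + 1), p ^ k) + p ^ (a + 1)) + 1
        = (p * (∑ k ∈ Finset.range (a + 1), p ^ k) + 1) + p * p ^ (a + 1) := by ring
      _ = ((∑ k ∈ Finset.range (a + 1), p ^ k) + p ^ (a + 1)) + p * p ^ (a + 1) := by rw [ih]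
      _ = ((∑ k ∈ Finset.range (a + 1), p ^ k) + p ^ (a + 1)) + p ^ (a + 1 + 1) := by ring

lemma sigma1_totient_le (m : ℕ) : Nat.totient m * sigma1 m ≤ m * m := by
  induction m using Nat.recOnPosPrimePosCoprime with
  | zero => simp [sigma1]
  | one => simp [sigma1]
  | prime_pow p a hp ha =>
    rw [sigma1, Nat.sum_divisors_prime_pow hp, Nat.totient_prime_pow hp ha]
    have hg := geom_aux p a
    set S := ∑ k ∈ Finset.range (a + 1), p ^ k with hS
    have hp1 : 1 ≤ p := hp.one_lt.le
    have h1 : (p - 1) * S ≤ p ^ (a + 1) := by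
      have hSle : S ≤ p * S := Nat.le_mul_of_pos_left S (by omega)
      have : (p - 1) * S + S = p * S := by
        rw [Nat.sub_mul, one_mul]
        omega
      omega
    calc p ^ (a - 1) * (p - 1) * S = p ^ (a - 1) * ((p - 1) * S) := by ring
      _ ≤ p ^ (a - 1) * p ^ (a + 1) := Nat.mul_le_mul_left _ h1
      _ = p ^ a * p ^ a := by
          rw [← pow_add, ← pow_add]
          congr 1
          omega
  | coprime p q hp hq hpq ihp ihq =>
    rw [Nat.totient_mul hpq, sigma1, hpq.sum_divisors_mul]
    calc Nat.totient p * Nat.totient q * ((∑ d ∈ p.divisors, d) * ∑ d ∈ q.divisors, d)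
        = (Nat.totient p * sigma1 p) * (Nat.totient q * sigma1 q) := by rw [sigma1, sigma1]; ring
      _ ≤ (p * p) * (q * q) := Nat.mul_le_mul ihp ihq
      _ = p * q * (p * q) := by ring

set_option maxHeartbeats 1600000 in
theorem H_lower_bound_of_min_prime_power_even (n : ℕ) (hn : 0 < n) (heven : Even n)
    (hnondef : 2 * n ≤ sigma1 n)
    (q : ℕ) (hq : q ∈ n.primeFactors)
    (hmin : ∀ p ∈ n.primeFactors,
      q ^ (n.factorization q + 1) ≤ p ^ (n.factorization p + 1)) :
    q = 2 ∨ H n ≥ 2 + (7 / 4) * (1 / (q ^ (n.factorization q + 1) : ℝ)) := by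
  right
  have hq' : q.Prime := Nat.prime_of_mem_primeFactors hq
  set a := n.factorization q with haa
  have ha : 0 < a := hq'.factorization_pos_of_dvd hn.ne' (Nat.dvd_of_mem_primeFactors hq)
  set m := ordCompl[q] n with hm
  have hnm : q ^ a * m = n := Nat.ordProj_mul_ordCompl_eq_self n q
  have hm0 : 0 < m := Nat.ordCompl_pos q hn.ne'
  have hcop : Nat.Coprime (q ^ a) m := (Nat.coprime_ordCompl hq' hn.ne').pow_left a
  have hσ : sigma1 n = sigma1 (q ^ a) * sigma1 m := by
    rw [← hnm]; exact hcop.sum_divisors_mul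
  have hφ : Nat.totient n = Nat.totient (q ^ a) * Nat.totient m := by
    rw [← hnm]; exact Nat.totient_mul hcop
  have hφqa : Nat.totient (q ^ a) = q ^ (a - 1) * (q - 1) := Nat.totient_prime_pow hq' ha
  have hSdef : sigma1 (q ^ a) = ∑ k ∈ Finset.range (a + 1), q ^ k := by
    rw [sigma1]; exact Nat.sum_divisors_prime_pow hq'
  set S := sigma1 (q ^ a) with hSS
  have hgeom : q * S + 1 = S + q ^ (a + 1) := by rw [hSdef]; exact geom_aux q a
  -- key nat inequality: 2 * q^a * φ(m) ≤ S * m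
  have hkey : 2 * q ^ a * Nat.totient m ≤ S * m := by
    have h2 : 2 * (q ^ a * m) * Nat.totient m ≤ S * sigma1 m * Nat.totient m := by
      have := hnondef
      rw [hσ, ← hnm] at this
      exact Nat.mul_le_mul_right _ this
    have h3 : S * sigma1 m * Nat.totient m ≤ S * (m * m) := by
      calc S * sigma1 m * Nat.totient m = S * (Nat.totient m * sigma1 m) := by ring
        _ ≤ S * (m * m) := Nat.mul_le_mul_left _ (sigma1_totient_le m)
    have h4 : (2 * q ^ a * Nat.totient m) * m ≤ (S * m) * m := by
      calc (2 * q ^ a * Nat.totient m) * m = 2 * (q ^ a * m) * Nat.totient m := by ring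
        _ ≤ S * sigma1 m * Nat.totient m := h2
        _ ≤ S * (m * m) := h3
        _ = (S * m) * m := by ring
    exact Nat.le_of_mul_le_mul_right h4 hm0
  -- move to the reals
  have hq2 : (2 : ℝ) ≤ (q : ℝ) := by exact_mod_cast hq'.two_le
  have hφm1 : (1 : ℝ) ≤ (Nat.totient m : ℝ) := by
    exact_mod_cast Nat.one_le_iff_ne_zero.mpr (Nat.totient_pos.mpr hm0).ne'
  have hm1 : (1 : ℝ) ≤ (m : ℝ) := by exact_mod_cast hm0
  have hφpos : (0 : ℝ) < (Nat.totient n : ℝ) := by exact_mod_cast Nat.totient_pos.mpr hn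
  have hQpos : (0 : ℝ) < (q:ℝ) ^ (a + 1) := by positivity
  have hnr : (n : ℝ) = (q:ℝ) ^ a * m := by exact_mod_cast (congrArg Nat.cast hnm).symm
  have hpowsplit : (q:ℝ) ^ (a - 1) * (q:ℝ) = (q:ℝ) ^ a := by
    rw [← pow_succ]; congr 1; omega
  have hpow1 : (q:ℝ) ^ a * (q:ℝ) = (q:ℝ) ^ (a + 1) := by rw [← pow_succ]
  have hφr : (Nat.totient n : ℝ) = (q:ℝ) ^ (a - 1) * ((q:ℝ) - 1) * (Nat.totient m : ℝ) := by
    rw [hφ, hφqa]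
    push_cast [hq'.one_le]
    ring
  have hSr : (q:ℝ) * S + 1 = S + (q:ℝ) ^ (a + 1) := by exact_mod_cast hgeom
  have hkeyr : 2 * (q:ℝ) ^ a * (Nat.totient m : ℝ) ≤ (S : ℝ) * m := by exact_mod_cast hkey
  rw [ge_iff_le, H, le_div_iff₀ hφpos]
  have hrw : (2 : ℝ) + 7 / 4 * (1 / (q:ℝ) ^ (a + 1)) = (8 * (q:ℝ) ^ (a + 1) + 7) / (4 * (q:ℝ) ^ (a + 1)) := by
    field_simp
    ring
  rw [hrw, div_mul_eq_mul_div, div_le_iff₀ (by positivity)]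
  -- goal: (8 * E^(a+1) + 7) * φ(n) ≤ n * (4 * E^(a+1))
  rw [hφr, hnr]
  have hc1 : (8 * (q:ℝ) ^ (a + 1) + 7) * ((q:ℝ) - 1) * (2 * (q:ℝ) ^ a * (Nat.totient m : ℝ))
      ≤ (8 * (q:ℝ) ^ (a + 1) + 7) * ((q:ℝ) - 1) * ((S : ℝ) * m) := by
    apply mul_le_mul_of_nonneg_left hkeyr
    nlinarith
  have hc2 : ((q:ℝ) - 1) * S = (q:ℝ) ^ (a + 1) - 1 := by nlinarith [hSr]
  have hc3 : (8 * (q:ℝ) ^ (a + 1) + 7) * (((q:ℝ) ^ (a + 1) - 1) * m) ≤ 8 * (q:ℝ) ^ (a + 1) * (q:ℝ) ^ (a + 1) * m := by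
    nlinarith [hQpos, hm1]
  -- combine, after multiplying the goal by 2E > 0
  have h2E : (0 : ℝ) < 2 * (q:ℝ) := by linarith
  apply le_of_mul_le_mul_right _ h2E
  calc (8 * (q:ℝ) ^ (a + 1) + 7) * ((q:ℝ) ^ (a - 1) * ((q:ℝ) - 1) * (Nat.totient m : ℝ)) * (2 * (q:ℝ))
      = (8 * (q:ℝ) ^ (a + 1) + 7) * ((q:ℝ) - 1) * (2 * ((q:ℝ) ^ (a - 1) * (q:ℝ)) * (Nat.totient m : ℝ)) := by ring
    _ = (8 * (q:ℝ) ^ (a + 1) + 7) * ((q:ℝ) - 1) * (2 * (q:ℝ) ^ a * (Nat.totient m : ℝ)) := by rw [hpowsplit]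
    _ ≤ (8 * (q:ℝ) ^ (a + 1) + 7) * ((q:ℝ) - 1) * ((S : ℝ) * m) := hc1
    _ = (8 * (q:ℝ) ^ (a + 1) + 7) * ((((q:ℝ) - 1) * S) * m) := by ring
    _ = (8 * (q:ℝ) ^ (a + 1) + 7) * (((q:ℝ) ^ (a + 1) - 1) * m) := by rw [hc2]
    _ ≤ 8 * (q:ℝ) ^ (a + 1) * (q:ℝ) ^ (a + 1) * m := hc3
    _ = 8 * (q:ℝ) ^ (a + 1) * (((q:ℝ) ^ a * (q:ℝ)) * m) := by ring
    _ = 8 * (q:ℝ) ^ (a + 1) * ((q:ℝ) ^ (a + 1) * m) := by rw [hpow1]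
    _ = (q:ℝ) ^ a * m * (4 * (q:ℝ) ^ (a + 1)) * (2 * (q:ℝ)) := by rw [← hpow1]; ring
end
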